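/- arXiv:1303.1036 — 4 statements merged into one kernel-verified Lean document; each statement's English description precedes it below -/
import Mathlib

section
/- Let K : G × G → ℝ be measurable with |K(x,τ)| ≤ C for almost every (x,τ) ∈ G × G, where C ≥ 0 is a constant, and let 1 ≤ p ≤ ∞. Then for every Z ∈ L_p(G) there exists a unique b ∈ L_p(G) such that b(x₁,x₂,x₃,x₄) + ∫₀^{x₁}∫₀^{x₂}∫₀^{x₃}∫₀^{x₄} K(x,τ) b(τ₁,τ₂,τ₃,τ₄) dτ₄ dτ₃ dτ₂ dτ₁ = Z(x₁,x₂,x₃,x₄) for almost every x ∈ G; moreover there exists a constant M ≥ 0, depending only on C, h₁, h₂, h₃, h₄ and p (and not on Z), such that ‖b‖_{L_p(G)} ≤ M ‖Z‖_{L_p(G)}. -/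
open MeasureTheory Set
open scoped ENNReal

/-- The box `G = (0,h₁) × (0,h₂) × (0,h₃) × (0,h₄)` in `ℝ⁴`. -/
def volterraBox (h₁ h₂ h₃ h₄ : ℝ) : Set (ℝ × ℝ × ℝ × ℝ) :=
  Ioo 0 h₁ ×ˢ Ioo 0 h₂ ×ˢ Ioo 0 h₃ ×ˢ Ioo 0 h₄

namespace VolterraAux

open Filter

/-- The region `(0,x₁] × (0,x₂] × (0,x₃] × (0,x₄]`. -/
def Rset (x : ℝ × ℝ × ℝ × ℝ) : Set (ℝ × ℝ × ℝ × ℝ) :=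
  Ioc 0 x.1 ×ˢ Ioc 0 x.2.1 ×ˢ Ioc 0 x.2.2.1 ×ˢ Ioc 0 x.2.2.2

/-- The enlarged region `(0,x₁] × (0,h₂] × (0,h₃] × (0,h₄]`. -/
def Sset (h₂ h₃ h₄ : ℝ) (x : ℝ × ℝ × ℝ × ℝ) : Set (ℝ × ℝ × ℝ × ℝ) :=
  Ioc 0 x.1 ×ˢ Ioc 0 h₂ ×ˢ Ioc 0 h₃ ×ˢ Ioc 0 h₄

/-- The Volterra integral operator. -/
noncomputable def T (K : (ℝ × ℝ × ℝ × ℝ) × (ℝ × ℝ × ℝ × ℝ) → ℝ)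
    (f : ℝ × ℝ × ℝ × ℝ → ℝ) (x : ℝ × ℝ × ℝ × ℝ) : ℝ :=
  ∫ τ in Rset x, K (x, τ) * f τ

variable {h₁ h₂ h₃ h₄ : ℝ}

lemma measurableSet_box : MeasurableSet (volterraBox h₁ h₂ h₃ h₄) :=
  measurableSet_Ioo.prod (measurableSet_Ioo.prod (measurableSet_Ioo.prod measurableSet_Ioo))

lemma measurableSet_Rset (x : ℝ × ℝ × ℝ × ℝ) : MeasurableSet (Rset x) :=
  measurableSet_Ioc.prod (measurableSet_Ioc.prod (measurableSet_Ioc.prod measurableSet_Ioc))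

lemma measurableSet_Sset (x : ℝ × ℝ × ℝ × ℝ) : MeasurableSet (Sset h₂ h₃ h₄ x) :=
  measurableSet_Ioc.prod (measurableSet_Ioc.prod (measurableSet_Ioc.prod measurableSet_Ioc))

lemma mem_box_iff {x : ℝ × ℝ × ℝ × ℝ} :
    x ∈ volterraBox h₁ h₂ h₃ h₄ ↔
      (0 < x.1 ∧ x.1 < h₁) ∧ (0 < x.2.1 ∧ x.2.1 < h₂) ∧
        (0 < x.2.2.1 ∧ x.2.2.1 < h₃) ∧ (0 < x.2.2.2 ∧ x.2.2.2 < h₄) := by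
  simp [volterraBox, Set.mem_prod, Set.mem_Ioo]

lemma mem_Rset_iff {x τ : ℝ × ℝ × ℝ × ℝ} :
    τ ∈ Rset x ↔ (0 < τ.1 ∧ τ.1 ≤ x.1) ∧ (0 < τ.2.1 ∧ τ.2.1 ≤ x.2.1) ∧
      (0 < τ.2.2.1 ∧ τ.2.2.1 ≤ x.2.2.1) ∧ (0 < τ.2.2.2 ∧ τ.2.2.2 ≤ x.2.2.2) := by
  simp [Rset, Set.mem_prod, Set.mem_Ioc]

lemma Rset_subset_box {x : ℝ × ℝ × ℝ × ℝ} (hx : x ∈ volterraBox h₁ h₂ h₃ h₄) :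
    Rset x ⊆ volterraBox h₁ h₂ h₃ h₄ := by
  obtain ⟨h1, h2, h3, h4⟩ := mem_box_iff.mp hx
  intro τ hτ
  obtain ⟨t1, t2, t3, t4⟩ := mem_Rset_iff.mp hτ
  exact mem_box_iff.mpr ⟨⟨t1.1, t1.2.trans_lt h1.2⟩, ⟨t2.1, t2.2.trans_lt h2.2⟩,
    ⟨t3.1, t3.2.trans_lt h3.2⟩, ⟨t4.1, t4.2.trans_lt h4.2⟩⟩

lemma Rset_subset_Sset {x : ℝ × ℝ × ℝ × ℝ} (hx : x ∈ volterraBox h₁ h₂ h₃ h₄) :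
    Rset x ⊆ Sset h₂ h₃ h₄ x := by
  obtain ⟨h1, h2, h3, h4⟩ := mem_box_iff.mp hx
  intro τ hτ
  obtain ⟨t1, t2, t3, t4⟩ := mem_Rset_iff.mp hτ
  refine ⟨t1, ⟨t2.1, t2.2.trans h2.2.le⟩, ⟨t3.1, t3.2.trans h3.2.le⟩, ⟨t4.1, t4.2.trans h4.2.le⟩⟩

lemma volume_box : volume (volterraBox h₁ h₂ h₃ h₄) =
    ENNReal.ofReal h₁ * (ENNReal.ofReal h₂ * (ENNReal.ofReal h₃ * ENNReal.ofReal h₄)) := by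
  rw [volterraBox]
  rw [show (volume : Measure (ℝ × ℝ × ℝ × ℝ)) = (volume : Measure ℝ).prod volume from rfl,
    Measure.prod_prod,
    show (volume : Measure (ℝ × ℝ × ℝ)) = (volume : Measure ℝ).prod volume from rfl,
    Measure.prod_prod,
    show (volume : Measure (ℝ × ℝ)) = (volume : Measure ℝ).prod volume from rfl,
    Measure.prod_prod]
  simp [Real.volume_Ioo]

lemma volume_box_lt_top : volume (volterraBox h₁ h₂ h₃ h₄) < ⊤ := by
  rw [volume_box]
  exact ENNReal.mul_lt_top ENNReal.ofReal_lt_top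
    (ENNReal.mul_lt_top ENNReal.ofReal_lt_top
      (ENNReal.mul_lt_top ENNReal.ofReal_lt_top ENNReal.ofReal_lt_top))


-- section bound
lemma section_bound {C : ℝ} {K : (ℝ × ℝ × ℝ × ℝ) × (ℝ × ℝ × ℝ × ℝ) → ℝ}
    (hKbd : ∀ᵐ z ∂((volume.restrict (volterraBox h₁ h₂ h₃ h₄)).prod
        (volume.restrict (volterraBox h₁ h₂ h₃ h₄))), |K z| ≤ C) :
    ∀ᵐ x ∂volume, x ∈ volterraBox h₁ h₂ h₃ h₄ →
      ∀ᵐ τ ∂volume, τ ∈ volterraBox h₁ h₂ h₃ h₄ → |K (x, τ)| ≤ C := by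
  have h := Measure.ae_ae_of_ae_prod hKbd
  rw [ae_restrict_iff' measurableSet_box] at h
  filter_upwards [h] with x hx hxB
  exact (ae_restrict_iff' measurableSet_box).mp (hx hxB)

-- integrability of the integrand and basic bound
lemma integrable_aux {C : ℝ} (hC : 0 ≤ C) {K : (ℝ × ℝ × ℝ × ℝ) × (ℝ × ℝ × ℝ × ℝ) → ℝ}
    (hKmeas : Measurable K)
    (hKb : ∀ᵐ x ∂volume, x ∈ volterraBox h₁ h₂ h₃ h₄ →
      ∀ᵐ τ ∂volume, τ ∈ volterraBox h₁ h₂ h₃ h₄ → |K (x, τ)| ≤ C)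
    {f : ℝ × ℝ × ℝ × ℝ → ℝ} (hf : IntegrableOn f (volterraBox h₁ h₂ h₃ h₄)) :
    ∀ᵐ x ∂volume, x ∈ volterraBox h₁ h₂ h₃ h₄ →
      (IntegrableOn (fun τ => K (x, τ) * f τ) (Rset x) ∧
        |T K f x| ≤ C * ∫ τ in volterraBox h₁ h₂ h₃ h₄, |f τ|) := by
  filter_upwards [hKb] with x hx hxB
  have hKx : ∀ᵐ τ ∂volume.restrict (Rset x), |K (x, τ)| ≤ C := by
    have h1 : ∀ᵐ τ ∂volume.restrict (volterraBox h₁ h₂ h₃ h₄), |K (x, τ)| ≤ C :=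
      (ae_restrict_iff' measurableSet_box).mpr (hx hxB)
    exact ae_restrict_of_ae_restrict_of_subset (Rset_subset_box hxB) h1
  have hfR : IntegrableOn f (Rset x) := hf.mono_set (Rset_subset_box hxB)
  have hmeasK : AEStronglyMeasurable (fun τ => K (x, τ)) (volume.restrict (Rset x)) :=
    (hKmeas.comp measurable_prodMk_left).aestronglyMeasurable
  have hint : IntegrableOn (fun τ => K (x, τ) * f τ) (Rset x) := by
    refine Integrable.mono' (hfR.abs.const_mul C) (hmeasK.mul hfR.aestronglyMeasurable) ?_
    filter_upwards [hKx] with τ hτ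
    rw [Real.norm_eq_abs, abs_mul]
    exact mul_le_mul_of_nonneg_right hτ (abs_nonneg _) |>.trans le_rfl
  refine ⟨hint, ?_⟩
  have s1 : |T K f x| ≤ ∫ τ in Rset x, |K (x, τ) * f τ| := by
    have := norm_integral_le_integral_norm (μ := volume.restrict (Rset x)) (fun τ => K (x, τ) * f τ)
    simpa only [T, Real.norm_eq_abs] using this
  have s2 : ∫ τ in Rset x, |K (x, τ) * f τ| ≤ ∫ τ in Rset x, C * |f τ| := by
    refine integral_mono_ae hint.abs (hfR.abs.const_mul C) ?_
    filter_upwards [hKx] with τ hτ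
    rw [abs_mul]
    exact mul_le_mul_of_nonneg_right hτ (abs_nonneg _)
  have s3 : ∫ τ in Rset x, C * |f τ| = C * ∫ τ in Rset x, |f τ| := integral_const_mul _ _
  have s4 : ∫ τ in Rset x, |f τ| ≤ ∫ τ in volterraBox h₁ h₂ h₃ h₄, |f τ| := by
    refine setIntegral_mono_set hf.abs ?_ (HasSubset.Subset.eventuallyLE (Rset_subset_box hxB))
    exact Eventually.of_forall fun τ => abs_nonneg _
  calc |T K f x| ≤ ∫ τ in Rset x, C * |f τ| := s1.trans s2
    _ = C * ∫ τ in Rset x, |f τ| := s3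
    _ ≤ C * ∫ τ in volterraBox h₁ h₂ h₃ h₄, |f τ| := mul_le_mul_of_nonneg_left s4 hC

-- measurability of T K f
lemma stronglyMeasurable_T {K : (ℝ × ℝ × ℝ × ℝ) × (ℝ × ℝ × ℝ × ℝ) → ℝ}
    (hKmeas : Measurable K) {f : ℝ × ℝ × ℝ × ℝ → ℝ} (hf : Measurable f) :
    StronglyMeasurable (T K f) := by
  have hE : MeasurableSet {z : (ℝ × ℝ × ℝ × ℝ) × (ℝ × ℝ × ℝ × ℝ) | z.2 ∈ Rset z.1} := by
    have : {z : (ℝ × ℝ × ℝ × ℝ) × (ℝ × ℝ × ℝ × ℝ) | z.2 ∈ Rset z.1} =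
        {z | (0 < z.2.1 ∧ z.2.1 ≤ z.1.1) ∧ (0 < z.2.2.1 ∧ z.2.2.1 ≤ z.1.2.1) ∧
          (0 < z.2.2.2.1 ∧ z.2.2.2.1 ≤ z.1.2.2.1) ∧ (0 < z.2.2.2.2 ∧ z.2.2.2.2 ≤ z.1.2.2.2)} := by
      ext z; exact mem_Rset_iff
    rw [this]
    apply MeasurableSet.inter
    · exact MeasurableSet.inter
        (measurableSet_lt measurable_const (measurable_snd.fst))
        (measurableSet_le (measurable_snd.fst) (measurable_fst.fst))
    apply MeasurableSet.inter
    · exact MeasurableSet.inter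
        (measurableSet_lt measurable_const (measurable_snd.snd.fst))
        (measurableSet_le (measurable_snd.snd.fst) (measurable_fst.snd.fst))
    apply MeasurableSet.inter
    · exact MeasurableSet.inter
        (measurableSet_lt measurable_const (measurable_snd.snd.snd.fst))
        (measurableSet_le (measurable_snd.snd.snd.fst) (measurable_fst.snd.snd.fst))
    · exact MeasurableSet.inter
        (measurableSet_lt measurable_const (measurable_snd.snd.snd.snd))
        (measurableSet_le (measurable_snd.snd.snd.snd) (measurable_fst.snd.snd.snd))
  have heq : T K f = fun x => ∫ τ,
      ({z : (ℝ × ℝ × ℝ × ℝ) × (ℝ × ℝ × ℝ × ℝ) | z.2 ∈ Rset z.1}.indicator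
        (fun z => K z * f z.2)) (x, τ) := by
    funext x
    rw [T, ← integral_indicator (measurableSet_Rset x)]
    congr 1
  rw [heq]
  exact (((hKmeas.mul (hf.comp measurable_snd)).indicator hE).stronglyMeasurable).integral_prod_right'

lemma volume_prod3 {a b c : ℝ} : volume (Ioc (0:ℝ) a ×ˢ Ioc (0:ℝ) b ×ˢ Ioc (0:ℝ) c) =
    ENNReal.ofReal a * (ENNReal.ofReal b * ENNReal.ofReal c) := by
  rw [show (volume : Measure (ℝ × ℝ × ℝ)) = (volume : Measure ℝ).prod volume from rfl,
    Measure.prod_prod,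
    show (volume : Measure (ℝ × ℝ)) = (volume : Measure ℝ).prod volume from rfl,
    Measure.prod_prod]
  simp [Real.volume_Ioc]

lemma volume_Sset {x : ℝ × ℝ × ℝ × ℝ} : volume (Sset h₂ h₃ h₄ x) =
    ENNReal.ofReal x.1 * (ENNReal.ofReal h₂ * (ENNReal.ofReal h₃ * ENNReal.ofReal h₄)) := by
  rw [Sset, show (volume : Measure (ℝ × ℝ × ℝ × ℝ)) = (volume : Measure ℝ).prod volume from rfl,
    Measure.prod_prod, volume_prod3]
  simp [Real.volume_Ioc]

lemma T_decay {C : ℝ} (hC : 0 ≤ C) {K : (ℝ × ℝ × ℝ × ℝ) × (ℝ × ℝ × ℝ × ℝ) → ℝ}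
    (hKmeas : Measurable K)
    (hKb : ∀ᵐ x ∂volume, x ∈ volterraBox h₁ h₂ h₃ h₄ →
      ∀ᵐ τ ∂volume, τ ∈ volterraBox h₁ h₂ h₃ h₄ → |K (x, τ)| ≤ C)
    {f : ℝ × ℝ × ℝ × ℝ → ℝ} (hf : IntegrableOn f (volterraBox h₁ h₂ h₃ h₄)) (n : ℕ) {a : ℝ}
    (ha : 0 ≤ a)
    (hbd : ∀ᵐ τ ∂volume, τ ∈ volterraBox h₁ h₂ h₃ h₄ → |f τ| ≤ a * τ.1 ^ n) :
    ∀ᵐ x ∂volume, x ∈ volterraBox h₁ h₂ h₃ h₄ →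
      |T K f x| ≤ C * (h₂ * h₃ * h₄) * a * x.1 ^ (n + 1) / (n + 1) := by
  filter_upwards [hKb, integrable_aux hC hKmeas hKb hf] with x hx haux hxB
  obtain ⟨hint, -⟩ := haux hxB
  obtain ⟨⟨hx1, hx1'⟩, ⟨hx2, hx2'⟩, ⟨hx3, hx3'⟩, ⟨hx4, hx4'⟩⟩ := mem_box_iff.mp hxB
  have h2 : 0 < h₂ := hx2.trans hx2'
  have h3 : 0 < h₃ := hx3.trans hx3'
  have h4 : 0 < h₄ := hx4.trans hx4'
  have hKx : ∀ᵐ τ ∂volume.restrict (Rset x), |K (x, τ)| ≤ C :=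
    ae_restrict_of_ae_restrict_of_subset (Rset_subset_box hxB)
      ((ae_restrict_iff' measurableSet_box).mpr (hx hxB))
  have hbdR : ∀ᵐ τ ∂volume.restrict (Rset x), |f τ| ≤ a * τ.1 ^ n :=
    ae_restrict_of_ae_restrict_of_subset (Rset_subset_box hxB)
      ((ae_restrict_iff' measurableSet_box).mpr hbd)
  have hφmeas : AEStronglyMeasurable (fun τ : ℝ × ℝ × ℝ × ℝ => C * a * τ.1 ^ n)
      (volume : Measure (ℝ × ℝ × ℝ × ℝ)) :=
    (((measurable_fst).pow_const n).const_mul (C * a)).aestronglyMeasurable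
  have hφS : IntegrableOn (fun τ : ℝ × ℝ × ℝ × ℝ => C * a * τ.1 ^ n) (Sset h₂ h₃ h₄ x) := by
    refine Measure.integrableOn_of_bounded (M := C * a * x.1 ^ n) ?_ hφmeas ?_
    · rw [volume_Sset]; exact (ENNReal.mul_lt_top ENNReal.ofReal_lt_top
        (ENNReal.mul_lt_top ENNReal.ofReal_lt_top
          (ENNReal.mul_lt_top ENNReal.ofReal_lt_top ENNReal.ofReal_lt_top))).ne
    · filter_upwards [self_mem_ae_restrict (measurableSet_Sset x)] with τ hτ
      have ht1 : 0 < τ.1 ∧ τ.1 ≤ x.1 := hτ.1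
      rw [Real.norm_eq_abs, abs_of_nonneg (mul_nonneg (mul_nonneg hC ha) (pow_nonneg ht1.1.le n))]
      exact mul_le_mul_of_nonneg_left (pow_le_pow_left₀ ht1.1.le ht1.2 n) (mul_nonneg hC ha)
  have hφR : IntegrableOn (fun τ : ℝ × ℝ × ℝ × ℝ => C * a * τ.1 ^ n) (Rset x) :=
    hφS.mono_set (Rset_subset_Sset hxB)
  have s1 : |T K f x| ≤ ∫ τ in Rset x, |K (x, τ) * f τ| := by
    have := norm_integral_le_integral_norm (μ := volume.restrict (Rset x))
      (fun τ => K (x, τ) * f τ)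
    simpa only [T, Real.norm_eq_abs] using this
  have s2 : ∫ τ in Rset x, |K (x, τ) * f τ| ≤ ∫ τ in Rset x, C * a * τ.1 ^ n := by
    refine integral_mono_ae hint.abs hφR ?_
    filter_upwards [hKx, hbdR, self_mem_ae_restrict (measurableSet_Rset x)] with τ hK hfτ hτR
    rw [abs_mul, mul_assoc]
    exact mul_le_mul hK hfτ (abs_nonneg _) hC
  have s3 : ∫ τ in Rset x, C * a * τ.1 ^ n ≤ ∫ τ in Sset h₂ h₃ h₄ x, C * a * τ.1 ^ n := by
    refine setIntegral_mono_set hφS ?_ (HasSubset.Subset.eventuallyLE (Rset_subset_Sset hxB))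
    filter_upwards [self_mem_ae_restrict (measurableSet_Sset x)] with τ hτ
    have ht1 : 0 < τ.1 := hτ.1.1
    positivity
  have e1 : ∫ τ in Sset h₂ h₃ h₄ x, C * a * τ.1 ^ n =
      (∫ s in Ioc (0:ℝ) x.1, C * a * s ^ n) *
        ∫ _ in (Ioc (0:ℝ) h₂ ×ˢ Ioc (0:ℝ) h₃ ×ˢ Ioc (0:ℝ) h₄), (1:ℝ) := by
    rw [Sset, show (volume : Measure (ℝ × ℝ × ℝ × ℝ)) = (volume : Measure ℝ).prod volume from rfl]
    have := setIntegral_prod_mul (μ := (volume : Measure ℝ)) (ν := (volume : Measure (ℝ × ℝ × ℝ)))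
      (fun s : ℝ => C * a * s ^ n) (fun _ : ℝ × ℝ × ℝ => (1:ℝ)) (Ioc (0:ℝ) x.1)
      (Ioc (0:ℝ) h₂ ×ˢ Ioc (0:ℝ) h₃ ×ˢ Ioc (0:ℝ) h₄)
    simpa using this
  have e2 : ∫ s in Ioc (0:ℝ) x.1, C * a * s ^ n = C * a * (x.1 ^ (n + 1) / (n + 1)) := by
    rw [← intervalIntegral.integral_of_le hx1.le, intervalIntegral.integral_const_mul,
      integral_pow]
    simp
  have e3 : ∫ _ in (Ioc (0:ℝ) h₂ ×ˢ Ioc (0:ℝ) h₃ ×ˢ Ioc (0:ℝ) h₄), (1:ℝ) = h₂ * (h₃ * h₄) := by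
    rw [setIntegral_const, measureReal_def, volume_prod3]
    simp [ENNReal.toReal_mul, ENNReal.toReal_ofReal h2.le, ENNReal.toReal_ofReal h3.le,
      ENNReal.toReal_ofReal h4.le]
  calc |T K f x| ≤ ∫ τ in Sset h₂ h₃ h₄ x, C * a * τ.1 ^ n := (s1.trans s2).trans s3
    _ = C * a * (x.1 ^ (n + 1) / (n + 1)) * (h₂ * (h₃ * h₄)) := by rw [e1, e2, e3]
    _ = C * (h₂ * h₃ * h₄) * a * x.1 ^ (n + 1) / (n + 1) := by ring

lemma prod_integral_eq {β : Type*} [MeasureSpace β] [SigmaFinite (volume : Measure β)]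
    (s : Set ℝ) (t : Set β) (g : ℝ × β → ℝ) (hg : IntegrableOn g (s ×ˢ t) volume) :
    ∫ z in s ×ˢ t, g z = ∫ a in s, ∫ y in t, g (a, y) := by
  rw [show (volume : Measure (ℝ × β)) = (volume : Measure ℝ).prod volume from rfl] at hg ⊢
  exact setIntegral_prod g hg

lemma section_int {β : Type*} [MeasureSpace β] [SigmaFinite (volume : Measure β)]
    (s : Set ℝ) (t : Set β) (g : ℝ × β → ℝ) (hg : IntegrableOn g (s ×ˢ t) volume) :
    ∀ᵐ a ∂volume.restrict s, IntegrableOn (fun y => g (a, y)) t volume := by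
  rw [show (volume : Measure (ℝ × β)) = (volume : Measure ℝ).prod volume from rfl] at hg
  have hg' : Integrable g ((volume.restrict s).prod (volume.restrict t)) := by
    rw [Measure.prod_restrict]; exact hg
  exact hg'.prod_right_ae

lemma triple_eq (s₂ s₃ s₄ : Set ℝ) (g : ℝ × ℝ × ℝ → ℝ)
    (hg : IntegrableOn g (s₂ ×ˢ s₃ ×ˢ s₄) volume) :
    ∫ z in s₂ ×ˢ s₃ ×ˢ s₄, g z = ∫ a in s₂, ∫ b in s₃, ∫ c in s₄, g (a, b, c) := by
  rw [prod_integral_eq _ _ _ hg]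
  refine integral_congr_ae ?_
  filter_upwards [section_int _ _ _ hg] with a ha
  rw [prod_integral_eq _ _ _ ha]

lemma quadruple_eq (s₁ s₂ s₃ s₄ : Set ℝ) (g : ℝ × ℝ × ℝ × ℝ → ℝ)
    (hg : IntegrableOn g (s₁ ×ˢ s₂ ×ˢ s₃ ×ˢ s₄) volume) :
    ∫ z in s₁ ×ˢ s₂ ×ˢ s₃ ×ˢ s₄, g z =
      ∫ a in s₁, ∫ b in s₂, ∫ c in s₃, ∫ d in s₄, g (a, b, c, d) := by
  rw [prod_integral_eq _ _ _ hg]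
  refine integral_congr_ae ?_
  filter_upwards [section_int _ _ _ hg] with a ha
  rw [triple_eq _ _ _ _ ha]

lemma iterated_eq {x : ℝ × ℝ × ℝ × ℝ} (hx1 : 0 ≤ x.1) (hx2 : 0 ≤ x.2.1)
    (hx3 : 0 ≤ x.2.2.1) (hx4 : 0 ≤ x.2.2.2)
    (g : ℝ × ℝ × ℝ × ℝ → ℝ) (hg : IntegrableOn g (Rset x) volume) :
    (∫ τ₁ in (0:ℝ)..x.1, ∫ τ₂ in (0:ℝ)..x.2.1, ∫ τ₃ in (0:ℝ)..x.2.2.1,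
      ∫ τ₄ in (0:ℝ)..x.2.2.2, g (τ₁, τ₂, τ₃, τ₄)) = ∫ τ in Rset x, g τ := by
  simp only [intervalIntegral.integral_of_le hx1, intervalIntegral.integral_of_le hx2,
    intervalIntegral.integral_of_le hx3, intervalIntegral.integral_of_le hx4]
  rw [Rset] at hg
  rw [Rset, quadruple_eq _ _ _ _ _ hg]
end VolterraAux

open VolterraAux Filter

set_option maxHeartbeats 1600000

/-- unique solvability in `L_p(G)` of the abstract Volterra integral
equation `b(x) + ∫₀^{x₁}∫₀^{x₂}∫₀^{x₃}∫₀^{x₄} K(x,τ) b(τ) dτ = Z(x)` relative to the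
point `(0,0,0,0)`, with an `L_p` a priori estimate with constant independent of `Z`. -/
theorem volterra_integral_equation_unique_solvable
    (h₁ h₂ h₃ h₄ : ℝ) (hh₁ : 0 < h₁) (hh₂ : 0 < h₂) (hh₃ : 0 < h₃) (hh₄ : 0 < h₄)
    (p : ℝ≥0∞) (hp : 1 ≤ p)
    (C : ℝ) (hC : 0 ≤ C)
    (K : (ℝ × ℝ × ℝ × ℝ) × (ℝ × ℝ × ℝ × ℝ) → ℝ)
    (hKmeas : Measurable K)
    (hKbd : ∀ᵐ z ∂((volume.restrict (volterraBox h₁ h₂ h₃ h₄)).prod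
        (volume.restrict (volterraBox h₁ h₂ h₃ h₄))), |K z| ≤ C) :
    ∃ M : ℝ, 0 ≤ M ∧
      ∀ Z : ℝ × ℝ × ℝ × ℝ → ℝ,
        MemLp Z p (volume.restrict (volterraBox h₁ h₂ h₃ h₄)) →
        ∃ b : ℝ × ℝ × ℝ × ℝ → ℝ,
          MemLp b p (volume.restrict (volterraBox h₁ h₂ h₃ h₄)) ∧
          (∀ᵐ x ∂(volume.restrict (volterraBox h₁ h₂ h₃ h₄)),
            b x + (∫ τ₁ in (0:ℝ)..x.1, ∫ τ₂ in (0:ℝ)..x.2.1, ∫ τ₃ in (0:ℝ)..x.2.2.1,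
              ∫ τ₄ in (0:ℝ)..x.2.2.2,
                K (x, (τ₁, τ₂, τ₃, τ₄)) * b (τ₁, τ₂, τ₃, τ₄)) = Z x) ∧
          eLpNorm b p (volume.restrict (volterraBox h₁ h₂ h₃ h₄)) ≤
            ENNReal.ofReal M * eLpNorm Z p (volume.restrict (volterraBox h₁ h₂ h₃ h₄)) ∧
          (∀ b' : ℝ × ℝ × ℝ × ℝ → ℝ,
            MemLp b' p (volume.restrict (volterraBox h₁ h₂ h₃ h₄)) →
            (∀ᵐ x ∂(volume.restrict (volterraBox h₁ h₂ h₃ h₄)),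
              b' x + (∫ τ₁ in (0:ℝ)..x.1, ∫ τ₂ in (0:ℝ)..x.2.1, ∫ τ₃ in (0:ℝ)..x.2.2.1,
                ∫ τ₄ in (0:ℝ)..x.2.2.2,
                  K (x, (τ₁, τ₂, τ₃, τ₄)) * b' (τ₁, τ₂, τ₃, τ₄)) = Z x) →
            b' =ᵐ[volume.restrict (volterraBox h₁ h₂ h₃ h₄)] b) := by
  classical
  have mb : MeasurableSet (volterraBox h₁ h₂ h₃ h₄) := measurableSet_box
  haveI : IsFiniteMeasure (volume.restrict (volterraBox h₁ h₂ h₃ h₄)) :=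
    ⟨by rw [Measure.restrict_apply_univ]; exact volume_box_lt_top⟩
  have hKb : ∀ᵐ x ∂volume, x ∈ volterraBox h₁ h₂ h₃ h₄ →
      ∀ᵐ τ ∂volume, τ ∈ volterraBox h₁ h₂ h₃ h₄ → |K (x, τ)| ≤ C := section_bound hKbd
  -- constants
  set r : ℝ := C * (h₂ * h₃ * h₄) * h₁ with hr_def
  have hr0 : 0 ≤ r := by positivity
  set A₀ : ℝ := ∑' n : ℕ, r ^ n / n.factorial with hA₀_def
  have hA₀0 : 0 ≤ A₀ := tsum_nonneg fun n => by positivity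
  set V : ℝ≥0∞ := volume (volterraBox h₁ h₂ h₃ h₄) with hV_def
  have hVne : V ≠ ⊤ := volume_box_lt_top.ne
  have hexp0 : 0 ≤ 1 - 1 / p.toReal := by
    rcases eq_or_ne p ⊤ with hptop | hptop
    · simp [hptop]
    · have h1 : 1 ≤ p.toReal := by
        have := ENNReal.toReal_mono hptop hp
        simpa using this
      have : 1 / p.toReal ≤ 1 := by
        rw [div_le_one (by linarith)]; linarith
      linarith
  set c₁ : ℝ≥0∞ := V ^ p.toReal⁻¹ * ENNReal.ofReal (C * A₀) * V ^ (1 - 1 / p.toReal)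
    with hc₁_def
  have hc₁ne : c₁ ≠ ⊤ := by
    refine ENNReal.mul_ne_top (ENNReal.mul_ne_top ?_ ENNReal.ofReal_ne_top) ?_
    · exact ENNReal.rpow_ne_top_of_nonneg (by positivity) hVne
    · exact ENNReal.rpow_ne_top_of_nonneg hexp0 hVne
  refine ⟨(1 + c₁).toReal, ENNReal.toReal_nonneg, ?_⟩
  have hMof : ENNReal.ofReal ((1 + c₁).toReal) = 1 + c₁ :=
    ENNReal.ofReal_toReal (by simp [hc₁ne])
  intro Z hZ
  -- measurable representative of Z
  obtain ⟨Z', hZsm, hZae⟩ : ∃ Z' : ℝ × ℝ × ℝ × ℝ → ℝ, StronglyMeasurable Z' ∧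
      Z =ᵐ[volume.restrict (volterraBox h₁ h₂ h₃ h₄)] Z' :=
    ⟨hZ.1.mk Z, hZ.1.stronglyMeasurable_mk, hZ.1.ae_eq_mk⟩
  have hZ' : MemLp Z' p (volume.restrict (volterraBox h₁ h₂ h₃ h₄)) := hZ.ae_eq hZae
  have hZm : Measurable Z' := hZsm.measurable
  have hZint : IntegrableOn Z' (volterraBox h₁ h₂ h₃ h₄) volume := hZ'.integrable hp
  -- Picard iterates
  set bseq : ℕ → (ℝ × ℝ × ℝ × ℝ → ℝ) :=
    fun n => Nat.rec Z' (fun _ g => fun x => Z' x - T K g x) n with hbseq_def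
  have bseq_succ : ∀ n, bseq (n + 1) = fun x => Z' x - T K (bseq n) x := fun n => rfl
  have hmeas : ∀ n, Measurable (bseq n) := by
    intro n
    induction n with
    | zero => exact hZm
    | succ n ih => exact hZm.sub (stronglyMeasurable_T hKmeas ih).measurable
  have hTint : ∀ n, IntegrableOn (bseq n) (volterraBox h₁ h₂ h₃ h₄) volume := by
    intro n
    induction n with
    | zero => exact hZint
    | succ n ih =>
      have hTn : IntegrableOn (T K (bseq n)) (volterraBox h₁ h₂ h₃ h₄) volume := by
        refine Measure.integrableOn_of_bounded
          (M := C * ∫ τ in volterraBox h₁ h₂ h₃ h₄, |bseq n τ|) hVne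
          (stronglyMeasurable_T hKmeas (hmeas n)).measurable.aestronglyMeasurable ?_
        rw [ae_restrict_iff' mb]
        filter_upwards [integrable_aux hC hKmeas hKb ih] with x hx hxB
        simpa only [Real.norm_eq_abs] using (hx hxB).2
      exact hZint.sub hTn
  -- differences
  set Δ : ℕ → (ℝ × ℝ × ℝ × ℝ → ℝ) := fun n x => bseq (n + 1) x - bseq n x with hΔ_def
  have hΔint : ∀ n, IntegrableOn (Δ n) (volterraBox h₁ h₂ h₃ h₄) volume :=
    fun n => (hTint (n + 1)).sub (hTint n)
  set m : ℝ := C * ∫ τ in volterraBox h₁ h₂ h₃ h₄, |Z' τ| with hm_def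
  have hm0 : 0 ≤ m := mul_nonneg hC (integral_nonneg fun τ => abs_nonneg _)
  -- key decay estimate
  have hKey : ∀ n, ∀ᵐ x ∂volume, x ∈ volterraBox h₁ h₂ h₃ h₄ →
      |Δ n x| ≤ m * (C * (h₂ * h₃ * h₄)) ^ n / n.factorial * x.1 ^ n := by
    intro n
    induction n with
    | zero =>
      filter_upwards [integrable_aux hC hKmeas hKb hZint] with x hx hxB
      have e : Δ 0 x = -(T K Z' x) := by
        show Z' x - T K Z' x - Z' x = -(T K Z' x); ring
      rw [e, abs_neg]
      simpa using (hx hxB).2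
    | succ n ih =>
      have ha' : (0:ℝ) ≤ m * (C * (h₂ * h₃ * h₄)) ^ n / n.factorial := by positivity
      have hdec := T_decay hC hKmeas hKb (hΔint n) n ha' ih
      filter_upwards [hdec, integrable_aux hC hKmeas hKb (hTint n),
        integrable_aux hC hKmeas hKb (hTint (n + 1))] with x hx h1 h2 hxB
      have l1 : T K (Δ n) x = T K (bseq (n + 1)) x - T K (bseq n) x := by
        rw [T, T, T, ← integral_sub (h2 hxB).1 (h1 hxB).1]
        congr 1; funext τ
        show K (x, τ) * (bseq (n + 1) τ - bseq n τ) = _; ring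
      have e : Δ (n + 1) x = -(T K (Δ n) x) := by
        show (Z' x - T K (bseq (n + 1)) x) - (Z' x - T K (bseq n) x) = _
        rw [l1]; ring
      rw [e, abs_neg]
      refine (hx hxB).trans (le_of_eq ?_)
      have hfac : (n.factorial : ℝ) ≠ 0 := Nat.cast_ne_zero.mpr n.factorial_ne_zero
      have hn1 : (n:ℝ) + 1 ≠ 0 := by positivity
      rw [Nat.factorial_succ]
      push_cast
      field_simp
      ring
  have hAll : ∀ᵐ x ∂volume, x ∈ volterraBox h₁ h₂ h₃ h₄ →
      ∀ n : ℕ, |Δ n x| ≤ m * r ^ n / n.factorial := by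
    have := ae_all_iff.mpr hKey
    filter_upwards [this] with x hx hxB n
    have hx1 : 0 ≤ x.1 := (mem_box_iff.mp hxB).1.1.le
    have hx1' : x.1 ≤ h₁ := (mem_box_iff.mp hxB).1.2.le
    refine (hx n hxB).trans ?_
    have : x.1 ^ n ≤ h₁ ^ n := pow_le_pow_left₀ hx1 hx1' n
    calc m * (C * (h₂ * h₃ * h₄)) ^ n / n.factorial * x.1 ^ n
        ≤ m * (C * (h₂ * h₃ * h₄)) ^ n / n.factorial * h₁ ^ n := by
          exact mul_le_mul_of_nonneg_left this (by positivity)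
      _ = m * r ^ n / n.factorial := by rw [hr_def, mul_pow]; ring
  have hsum0 : Summable (fun n : ℕ => m * r ^ n / n.factorial) := by
    have := (Real.summable_pow_div_factorial r).mul_left m
    simpa [mul_div_assoc] using this
  -- the solution
  set u : ℝ × ℝ × ℝ × ℝ → ℝ := fun x => ∑' n, Δ n x with hu_def
  set b : ℝ × ℝ × ℝ × ℝ → ℝ := fun x => Z' x + u x with hb_def
  have hps : ∀ (N : ℕ) (x : ℝ × ℝ × ℝ × ℝ),
      ∑ k ∈ Finset.range N, Δ k x = bseq N x - Z' x := by
    intro N x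
    exact Finset.sum_range_sub (fun k => bseq k x) N
  have hgood : ∀ᵐ x ∂volume, x ∈ volterraBox h₁ h₂ h₃ h₄ →
      (Summable (fun n => Δ n x) ∧
        Filter.Tendsto (fun N => bseq N x) Filter.atTop (nhds (b x)) ∧ |u x| ≤ m * A₀) := by
    filter_upwards [hAll] with x hx hxB
    have hb' : ∀ n, |Δ n x| ≤ m * r ^ n / n.factorial := hx hxB
    have hsum : Summable (fun n => Δ n x) := by
      refine Summable.of_norm_bounded hsum0 fun n => ?_
      rw [Real.norm_eq_abs]
      exact hb' n
    refine ⟨hsum, ?_, ?_⟩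
    · have h1 := hsum.hasSum.tendsto_sum_nat
      have h2 : Filter.Tendsto (fun N => Z' x + ∑ k ∈ Finset.range N, Δ k x)
          Filter.atTop (nhds (Z' x + u x)) := tendsto_const_nhds.add h1
      have h3 : (fun N => Z' x + ∑ k ∈ Finset.range N, Δ k x) = fun N => bseq N x := by
        funext N; rw [hps N x]; ring
      rw [h3] at h2
      exact h2
    · have habs : Summable fun n => |Δ n x| := hsum.abs
      calc |u x| ≤ ∑' n, |Δ n x| := by
            simpa [Real.norm_eq_abs] using
              norm_tsum_le_tsum_norm (f := fun n => Δ n x)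
                (by simpa [Real.norm_eq_abs] using habs)
        _ ≤ ∑' n, m * r ^ n / n.factorial := Summable.tsum_le_tsum hb' habs hsum0
        _ = m * A₀ := by
            rw [hA₀_def, ← tsum_mul_left]
            congr 1; funext n; rw [mul_div_assoc]
  have hu_aesm : AEStronglyMeasurable u (volume.restrict (volterraBox h₁ h₂ h₃ h₄)) := by
    refine aestronglyMeasurable_of_tendsto_ae Filter.atTop
      (f := fun N => fun x => bseq N x - Z' x)
      (fun N => ((hmeas N).sub hZm).aestronglyMeasurable) ?_
    rw [ae_restrict_iff' mb]
    filter_upwards [hgood] with x hx hxB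
    have := ((hx hxB).2.1).sub (tendsto_const_nhds (x := Z' x))
    simpa [hb_def] using this
  have hu_mem : MemLp u p (volume.restrict (volterraBox h₁ h₂ h₃ h₄)) := by
    refine MemLp.of_bound hu_aesm (m * A₀) ?_
    rw [ae_restrict_iff' mb]
    filter_upwards [hgood] with x hx hxB
    simpa [Real.norm_eq_abs] using (hx hxB).2.2
  have hb_mem : MemLp b p (volume.restrict (volterraBox h₁ h₂ h₃ h₄)) := hZ'.add hu_mem
  have hb_int : IntegrableOn b (volterraBox h₁ h₂ h₃ h₄) volume := hb_mem.integrable hp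
  -- the integral equation
  have hFmeas : ∀ N : ℕ, AEStronglyMeasurable (fun τ => |b τ - bseq N τ|)
      (volume.restrict (volterraBox h₁ h₂ h₃ h₄)) := by
    intro N
    have h1 : AEStronglyMeasurable (fun τ => b τ - bseq N τ)
        (volume.restrict (volterraBox h₁ h₂ h₃ h₄)) :=
      hb_mem.1.sub (hmeas N).aestronglyMeasurable
    simpa [Real.norm_eq_abs] using h1.norm
  have hbound_int : Integrable (fun τ => |b τ| + (|Z' τ| + m * A₀))
      (volume.restrict (volterraBox h₁ h₂ h₃ h₄)) :=
    hb_int.abs.add (hZint.abs.add (integrable_const _))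
  have hFle : ∀ N : ℕ, ∀ᵐ τ ∂(volume.restrict (volterraBox h₁ h₂ h₃ h₄)),
      ‖|b τ - bseq N τ|‖ ≤ |b τ| + (|Z' τ| + m * A₀) := by
    intro N
    rw [ae_restrict_iff' mb]
    filter_upwards [hAll] with τ hτ hτB
    have h1 : |bseq N τ - Z' τ| ≤ m * A₀ := by
      rw [← hps N τ]
      have hsumτ : Summable (fun n => Δ n τ) := by
        refine Summable.of_norm_bounded hsum0 fun n => ?_
        rw [Real.norm_eq_abs]
        exact hτ hτB n
      have habs : Summable (fun n => |Δ n τ|) := hsumτ.abs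
      calc |∑ k ∈ Finset.range N, Δ k τ| ≤ ∑ k ∈ Finset.range N, |Δ k τ| :=
            Finset.abs_sum_le_sum_abs _ _
        _ ≤ ∑' n, |Δ n τ| := Summable.sum_le_tsum _ (fun i _ => abs_nonneg _) habs
        _ ≤ ∑' n, m * r ^ n / n.factorial :=
            Summable.tsum_le_tsum (fun n => hτ hτB n) habs hsum0
        _ = m * A₀ := by
            rw [hA₀_def, ← tsum_mul_left]; congr 1; funext n; rw [mul_div_assoc]
    have h2 : |b τ - bseq N τ| ≤ |b τ| + |bseq N τ - Z' τ| + |Z' τ| := by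
      have e : b τ - bseq N τ = b τ - (bseq N τ - Z' τ) - Z' τ := by ring
      rw [e]
      calc |b τ - (bseq N τ - Z' τ) - Z' τ|
          ≤ |b τ - (bseq N τ - Z' τ)| + |Z' τ| := abs_sub _ _
        _ ≤ |b τ| + |bseq N τ - Z' τ| + |Z' τ| := by
            have := abs_sub (b τ) (bseq N τ - Z' τ)
            linarith
    rw [Real.norm_eq_abs, abs_abs]
    linarith
  have hFtend : ∀ᵐ τ ∂(volume.restrict (volterraBox h₁ h₂ h₃ h₄)),
      Filter.Tendsto (fun N => |b τ - bseq N τ|) Filter.atTop (nhds 0) := by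
    rw [ae_restrict_iff' mb]
    filter_upwards [hgood] with τ hτ hτB
    have h1 := (tendsto_const_nhds (x := b τ)).sub ((hτ hτB).2.1)
    have h2 : Filter.Tendsto (fun N => b τ - bseq N τ) Filter.atTop (nhds 0) := by
      simpa using h1
    simpa using h2.abs
  have hDom : Filter.Tendsto
      (fun N => ∫ τ in volterraBox h₁ h₂ h₃ h₄, |b τ - bseq N τ|) Filter.atTop (nhds 0) := by
    have h0 := tendsto_integral_of_dominated_convergence
      (μ := volume.restrict (volterraBox h₁ h₂ h₃ h₄))
      (F := fun N τ => |b τ - bseq N τ|) (f := fun _ => (0:ℝ))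
      (bound := fun τ => |b τ| + (|Z' τ| + m * A₀))
      hFmeas hbound_int hFle hFtend
    simpa using h0
  have haux_b := integrable_aux hC hKmeas hKb hb_int
  have haux_n := ae_all_iff.mpr fun N => integrable_aux hC hKmeas hKb (hTint N)
  have haux_d := ae_all_iff.mpr fun N =>
    integrable_aux hC hKmeas hKb (hb_int.sub (hTint N))
  have heqn : ∀ᵐ x ∂volume, x ∈ volterraBox h₁ h₂ h₃ h₄ →
      b x + T K b x = Z' x := by
    filter_upwards [hgood, haux_b, haux_n, haux_d] with x hg hb1 hn1 hd1 hxB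
    have hTlim : Filter.Tendsto (fun N => T K (bseq N) x) Filter.atTop (nhds (T K b x)) := by
      have hdiff : ∀ N : ℕ, T K b x - T K (bseq N) x = T K (fun τ => b τ - bseq N τ) x := by
        intro N
        rw [T, T, T, ← integral_sub (hb1 hxB).1 ((hn1 N) hxB).1]
        congr 1; funext τ; ring
      have h0 : Filter.Tendsto (fun N => T K b x - T K (bseq N) x) Filter.atTop (nhds 0) := by
        refine squeeze_zero_norm (fun N => ?_) (by simpa using hDom.const_mul C)
        rw [Real.norm_eq_abs, hdiff N]
        exact ((hd1 N) hxB).2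
      have := tendsto_const_nhds (x := T K b x) |>.sub h0
      simpa using this
    have h1 : Filter.Tendsto (fun N => bseq (N + 1) x) Filter.atTop
        (nhds (Z' x - T K b x)) := by
      have e : (fun N => bseq (N + 1) x) = fun N => Z' x - T K (bseq N) x := rfl
      rw [e]
      exact tendsto_const_nhds.sub hTlim
    have h2 : Filter.Tendsto (fun N => bseq (N + 1) x) Filter.atTop (nhds (b x)) :=
      ((hg hxB).2.1).comp (tendsto_add_atTop_nat 1)
    have := tendsto_nhds_unique h2 h1
    linarith
  refine ⟨b, hb_mem, ?_, ?_, ?_⟩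
  · -- equation
    rw [ae_restrict_iff' mb]
    filter_upwards [heqn, haux_b, (ae_restrict_iff' mb).mp hZae] with x he hax hzx hxB
    obtain ⟨⟨hx1, _⟩, ⟨hx2, _⟩, ⟨hx3, _⟩, ⟨hx4, _⟩⟩ := mem_box_iff.mp hxB
    have e : (∫ τ₁ in (0:ℝ)..x.1, ∫ τ₂ in (0:ℝ)..x.2.1, ∫ τ₃ in (0:ℝ)..x.2.2.1,
        ∫ τ₄ in (0:ℝ)..x.2.2.2, K (x, (τ₁, τ₂, τ₃, τ₄)) * b (τ₁, τ₂, τ₃, τ₄)) = T K b x :=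
      iterated_eq hx1.le hx2.le hx3.le hx4.le (fun τ => K (x, τ) * b τ) (hax hxB).1
    rw [e]
    exact (he hxB).trans (hzx hxB).symm
  · -- norm bound
    have hZnorm : eLpNorm Z' p (volume.restrict (volterraBox h₁ h₂ h₃ h₄)) =
        eLpNorm Z p (volume.restrict (volterraBox h₁ h₂ h₃ h₄)) :=
      eLpNorm_congr_ae hZae.symm
    have hn1 : eLpNorm b p (volume.restrict (volterraBox h₁ h₂ h₃ h₄)) ≤
        eLpNorm Z' p (volume.restrict (volterraBox h₁ h₂ h₃ h₄)) +
          eLpNorm u p (volume.restrict (volterraBox h₁ h₂ h₃ h₄)) :=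
      eLpNorm_add_le hZ'.1 hu_mem.1 hp
    have hn2 : eLpNorm u p (volume.restrict (volterraBox h₁ h₂ h₃ h₄)) ≤
        V ^ p.toReal⁻¹ * ENNReal.ofReal (m * A₀) := by
      have := eLpNorm_le_of_ae_bound (p := p)
        (μ := volume.restrict (volterraBox h₁ h₂ h₃ h₄)) (f := u) (C := m * A₀)
        (by
          rw [ae_restrict_iff' mb]
          filter_upwards [hgood] with x hx hxB
          simpa [Real.norm_eq_abs] using (hx hxB).2.2)
      simpa [hV_def, Measure.restrict_apply_univ] using this
    have hmA : ENNReal.ofReal (m * A₀) ≤ ENNReal.ofReal (C * A₀) *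
        (eLpNorm Z p (volume.restrict (volterraBox h₁ h₂ h₃ h₄)) * V ^ (1 - 1 / p.toReal)) := by
      have e1 : ENNReal.ofReal (m * A₀) =
          ENNReal.ofReal (C * A₀) * ENNReal.ofReal (∫ τ in volterraBox h₁ h₂ h₃ h₄, |Z' τ|) := by
        rw [← ENNReal.ofReal_mul (by positivity)]
        congr 1
        rw [hm_def]; ring
      have e2 : ENNReal.ofReal (∫ τ in volterraBox h₁ h₂ h₃ h₄, |Z' τ|) =
          eLpNorm Z' 1 (volume.restrict (volterraBox h₁ h₂ h₃ h₄)) := by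
        rw [eLpNorm_one_eq_lintegral_enorm]
        have := ofReal_integral_norm_eq_lintegral_enorm hZint
        simpa [Real.norm_eq_abs] using this
      have e3 : eLpNorm Z' 1 (volume.restrict (volterraBox h₁ h₂ h₃ h₄)) ≤
          eLpNorm Z' p (volume.restrict (volterraBox h₁ h₂ h₃ h₄)) * V ^ (1 - 1 / p.toReal) := by
        have := eLpNorm_le_eLpNorm_mul_rpow_measure_univ hp hZ'.1
        simpa [hV_def, Measure.restrict_apply_univ] using this
      rw [e1, e2]
      rw [hZnorm] at e3
      exact mul_le_mul_right e3 _
    calc eLpNorm b p (volume.restrict (volterraBox h₁ h₂ h₃ h₄))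
        ≤ eLpNorm Z p (volume.restrict (volterraBox h₁ h₂ h₃ h₄)) +
            eLpNorm u p (volume.restrict (volterraBox h₁ h₂ h₃ h₄)) := by
          rw [← hZnorm]; exact hn1
      _ ≤ eLpNorm Z p (volume.restrict (volterraBox h₁ h₂ h₃ h₄)) +
            V ^ p.toReal⁻¹ * (ENNReal.ofReal (C * A₀) *
              (eLpNorm Z p (volume.restrict (volterraBox h₁ h₂ h₃ h₄)) *
                V ^ (1 - 1 / p.toReal))) := by
          exact add_le_add_right (hn2.trans (mul_le_mul_right hmA _)) _
      _ = (1 + c₁) * eLpNorm Z p (volume.restrict (volterraBox h₁ h₂ h₃ h₄)) := by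
          rw [hc₁_def]; ring
      _ = ENNReal.ofReal ((1 + c₁).toReal) *
            eLpNorm Z p (volume.restrict (volterraBox h₁ h₂ h₃ h₄)) := by rw [hMof]
  · -- uniqueness
    intro b' hb'mem hb'eq
    have hb'int : IntegrableOn b' (volterraBox h₁ h₂ h₃ h₄) volume := hb'mem.integrable hp
    have haux_b' := integrable_aux hC hKmeas hKb hb'int
    have hb'T : ∀ᵐ x ∂volume, x ∈ volterraBox h₁ h₂ h₃ h₄ →
        b' x + T K b' x = Z' x := by
      filter_upwards [(ae_restrict_iff' mb).mp hb'eq, (ae_restrict_iff' mb).mp hZae,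
        haux_b'] with x hx hzx hax hxB
      obtain ⟨⟨hx1, _⟩, ⟨hx2, _⟩, ⟨hx3, _⟩, ⟨hx4, _⟩⟩ := mem_box_iff.mp hxB
      have e : (∫ τ₁ in (0:ℝ)..x.1, ∫ τ₂ in (0:ℝ)..x.2.1, ∫ τ₃ in (0:ℝ)..x.2.2.1,
          ∫ τ₄ in (0:ℝ)..x.2.2.2, K (x, (τ₁, τ₂, τ₃, τ₄)) * b' (τ₁, τ₂, τ₃, τ₄)) = T K b' x :=
        iterated_eq hx1.le hx2.le hx3.le hx4.le (fun τ => K (x, τ) * b' τ) (hax hxB).1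
      have := hx hxB
      rw [e] at this
      rw [this]
      exact (hzx hxB)
    have hd_int : IntegrableOn (fun x => b' x - b x) (volterraBox h₁ h₂ h₃ h₄) volume :=
      hb'int.sub hb_int
    have haux_dd := integrable_aux hC hKmeas hKb hd_int
    have hdeq : ∀ᵐ x ∂volume, x ∈ volterraBox h₁ h₂ h₃ h₄ →
        b' x - b x = -(T K (fun τ => b' τ - b τ) x) := by
      filter_upwards [hb'T, heqn, haux_b, haux_b'] with x h1 h2 hb1 hb'1 hxB
      have l1 : T K (fun τ => b' τ - b τ) x = T K b' x - T K b x := by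
        rw [T, T, T, ← integral_sub (hb'1 hxB).1 (hb1 hxB).1]
        congr 1; funext τ; ring
      have e1 := h1 hxB
      have e2 := h2 hxB
      rw [l1]
      linarith
    set m' : ℝ := C * ∫ τ in volterraBox h₁ h₂ h₃ h₄, |b' τ - b τ| with hm'_def
    have hm'0 : 0 ≤ m' := mul_nonneg hC (integral_nonneg fun τ => abs_nonneg _)
    have hQ : ∀ n, ∀ᵐ x ∂volume, x ∈ volterraBox h₁ h₂ h₃ h₄ →
        |b' x - b x| ≤ m' * (C * (h₂ * h₃ * h₄)) ^ n / n.factorial * x.1 ^ n := by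
      intro n
      induction n with
      | zero =>
        filter_upwards [hdeq, haux_dd] with x h1 h2 hxB
        rw [h1 hxB, abs_neg]
        simpa using (h2 hxB).2
      | succ n ih =>
        have ha' : (0:ℝ) ≤ m' * (C * (h₂ * h₃ * h₄)) ^ n / n.factorial := by positivity
        have hdec := T_decay hC hKmeas hKb hd_int n ha' ih
        filter_upwards [hdeq, hdec] with x h1 h2 hxB
        rw [h1 hxB, abs_neg]
        refine (h2 hxB).trans (le_of_eq ?_)
        have hfac : (n.factorial : ℝ) ≠ 0 := Nat.cast_ne_zero.mpr n.factorial_ne_zero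
        have hn1 : (n:ℝ) + 1 ≠ 0 := by positivity
        rw [Nat.factorial_succ]
        push_cast
        field_simp
        ring
    have hzero : ∀ᵐ x ∂volume, x ∈ volterraBox h₁ h₂ h₃ h₄ → b' x = b x := by
      filter_upwards [ae_all_iff.mpr hQ] with x hx hxB
      have hx1 : 0 ≤ x.1 := (mem_box_iff.mp hxB).1.1.le
      have hx1' : x.1 ≤ h₁ := (mem_box_iff.mp hxB).1.2.le
      have hle : ∀ n : ℕ, |b' x - b x| ≤ m' * r ^ n / n.factorial := by
        intro n
        refine (hx n hxB).trans ?_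
        have hpow : x.1 ^ n ≤ h₁ ^ n := pow_le_pow_left₀ hx1 hx1' n
        calc m' * (C * (h₂ * h₃ * h₄)) ^ n / n.factorial * x.1 ^ n
            ≤ m' * (C * (h₂ * h₃ * h₄)) ^ n / n.factorial * h₁ ^ n :=
              mul_le_mul_of_nonneg_left hpow (by positivity)
          _ = m' * r ^ n / n.factorial := by rw [hr_def, mul_pow]; ring
      have htend0 : Filter.Tendsto (fun n : ℕ => m' * r ^ n / n.factorial)
          Filter.atTop (nhds 0) := by
        have := ((Real.summable_pow_div_factorial r).mul_left m').tendsto_atTop_zero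
        simpa [mul_div_assoc] using this
      have hd0 : |b' x - b x| ≤ 0 := ge_of_tendsto' htend0 hle
      have := abs_nonpos_iff.mp hd0
      linarith [sub_eq_zero.mp this]
    rw [show (volume.restrict (volterraBox h₁ h₂ h₃ h₄)) =
      (volume.restrict (volterraBox h₁ h₂ h₃ h₄)) from rfl]
    exact (ae_restrict_iff' mb).mpr hzero
end

section
/- For every (x₂, x₄) ∈ [0,h₂] × [0,h₄], the function x₃ ↦ F(x₂, x₃, x₄) has a (one-sided) derivative at x₃ = 0, and this derivative equals M₁(0, x₂, x₄); i.e. the compatibility condition F_{x₃}(x₂, 0, x₄) = Φ(0, x₂, x₄) holds, where Φ = M₁. -/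
open MeasureTheory Set intervalIntegral

/-- The nonclassical Goursat data of problem (1),(4): the right-hand sides
`φ_{i₁,i₂,i₃,i₄}` of the boundary conditions (4).  Here the two `Fin 2` arguments
record the indices `i₃, i₄ ∈ {0,1}`, `φ002` stands for `φ_{0,0,2,i₄}`, `φ00d2` for
`φ_{0,0,i₃,2}`, `φ102` for `φ_{1,0,2,i₄}`, `φ10d2` for `φ_{1,0,i₃,2}`, etc. -/
structure GoursatData where
  φ00 : Fin 2 → Fin 2 → ℝ
  φ10 : Fin 2 → Fin 2 → ℝ → ℝ
  φ01 : Fin 2 → Fin 2 → ℝ → ℝ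
  φ002 : Fin 2 → ℝ → ℝ
  φ00d2 : Fin 2 → ℝ → ℝ
  φ11 : Fin 2 → Fin 2 → ℝ → ℝ → ℝ
  φ102 : Fin 2 → ℝ → ℝ → ℝ
  φ10d2 : Fin 2 → ℝ → ℝ → ℝ
  φ012 : Fin 2 → ℝ → ℝ → ℝ
  φ01d2 : Fin 2 → ℝ → ℝ → ℝ
  φ0022 : ℝ → ℝ → ℝ
  φ112 : Fin 2 → ℝ → ℝ → ℝ → ℝ
  φ11d2 : Fin 2 → ℝ → ℝ → ℝ → ℝ
  φ0122 : ℝ → ℝ → ℝ → ℝ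
  φ1022 : ℝ → ℝ → ℝ → ℝ

/-- Continuity of the Goursat data on the corresponding closed boxes. -/
def GoursatData.ContOn (d : GoursatData) (h₁ h₂ h₃ h₄ : ℝ) : Prop :=
  (∀ i₃ i₄, ContinuousOn (d.φ10 i₃ i₄) (Icc 0 h₁)) ∧
  (∀ i₃ i₄, ContinuousOn (d.φ01 i₃ i₄) (Icc 0 h₂)) ∧
  (∀ i₄, ContinuousOn (d.φ002 i₄) (Icc 0 h₃)) ∧
  (∀ i₃, ContinuousOn (d.φ00d2 i₃) (Icc 0 h₄)) ∧
  (∀ i₃ i₄, ContinuousOn (fun q : ℝ × ℝ => d.φ11 i₃ i₄ q.1 q.2)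
    (Icc 0 h₁ ×ˢ Icc 0 h₂)) ∧
  (∀ i₄, ContinuousOn (fun q : ℝ × ℝ => d.φ102 i₄ q.1 q.2) (Icc 0 h₁ ×ˢ Icc 0 h₃)) ∧
  (∀ i₃, ContinuousOn (fun q : ℝ × ℝ => d.φ10d2 i₃ q.1 q.2) (Icc 0 h₁ ×ˢ Icc 0 h₄)) ∧
  (∀ i₄, ContinuousOn (fun q : ℝ × ℝ => d.φ012 i₄ q.1 q.2) (Icc 0 h₂ ×ˢ Icc 0 h₃)) ∧
  (∀ i₃, ContinuousOn (fun q : ℝ × ℝ => d.φ01d2 i₃ q.1 q.2) (Icc 0 h₂ ×ˢ Icc 0 h₄)) ∧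
  ContinuousOn (fun q : ℝ × ℝ => d.φ0022 q.1 q.2) (Icc 0 h₃ ×ˢ Icc 0 h₄) ∧
  (∀ i₄, ContinuousOn (fun q : ℝ × ℝ × ℝ => d.φ112 i₄ q.1 q.2.1 q.2.2)
    (Icc 0 h₁ ×ˢ Icc 0 h₂ ×ˢ Icc 0 h₃)) ∧
  (∀ i₃, ContinuousOn (fun q : ℝ × ℝ × ℝ => d.φ11d2 i₃ q.1 q.2.1 q.2.2)
    (Icc 0 h₁ ×ˢ Icc 0 h₂ ×ˢ Icc 0 h₄)) ∧
  ContinuousOn (fun q : ℝ × ℝ × ℝ => d.φ0122 q.1 q.2.1 q.2.2)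
    (Icc 0 h₂ ×ˢ Icc 0 h₃ ×ˢ Icc 0 h₄) ∧
  ContinuousOn (fun q : ℝ × ℝ × ℝ => d.φ1022 q.1 q.2.1 q.2.2)
    (Icc 0 h₁ ×ˢ Icc 0 h₃ ×ˢ Icc 0 h₄)

/-- The Goursat boundary value `F(x₂,x₃,x₄)` (the trace `u|_{x₁=0}`). -/
noncomputable def GoursatData.F (d : GoursatData) (x₂ x₃ x₄ : ℝ) : ℝ :=
  (∑ i₃ : Fin 2, ∑ i₄ : Fin 2, x₃ ^ (i₃ : ℕ) * x₄ ^ (i₄ : ℕ) * d.φ00 i₃ i₄)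
  + (∑ i₃ : Fin 2, ∑ i₄ : Fin 2, x₃ ^ (i₃ : ℕ) * x₄ ^ (i₄ : ℕ) *
      ∫ ξ₂ in (0:ℝ)..x₂, d.φ01 i₃ i₄ ξ₂)
  + (∑ i₄ : Fin 2, x₄ ^ (i₄ : ℕ) * ∫ ξ₃ in (0:ℝ)..x₃, (x₃ - ξ₃) * d.φ002 i₄ ξ₃)
  + (∑ i₃ : Fin 2, x₃ ^ (i₃ : ℕ) * ∫ ξ₄ in (0:ℝ)..x₄, (x₄ - ξ₄) * d.φ00d2 i₃ ξ₄)
  + (∑ i₄ : Fin 2, x₄ ^ (i₄ : ℕ) *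
      ∫ ξ₂ in (0:ℝ)..x₂, ∫ ξ₃ in (0:ℝ)..x₃, (x₃ - ξ₃) * d.φ012 i₄ ξ₂ ξ₃)
  + (∫ ξ₃ in (0:ℝ)..x₃, ∫ ξ₄ in (0:ℝ)..x₄, (x₃ - ξ₃) * (x₄ - ξ₄) * d.φ0022 ξ₃ ξ₄)
  + (∑ i₃ : Fin 2, x₃ ^ (i₃ : ℕ) *
      ∫ ξ₂ in (0:ℝ)..x₂, ∫ ξ₄ in (0:ℝ)..x₄, (x₄ - ξ₄) * d.φ01d2 i₃ ξ₂ ξ₄)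
  + ∫ ξ₂ in (0:ℝ)..x₂, ∫ ξ₃ in (0:ℝ)..x₃, ∫ ξ₄ in (0:ℝ)..x₄,
      (x₃ - ξ₃) * (x₄ - ξ₄) * d.φ0122 ξ₂ ξ₃ ξ₄

/-- The Goursat boundary value `g(x₁,x₃,x₄)` (the trace `u|_{x₂=0}`). -/
noncomputable def GoursatData.g (d : GoursatData) (x₁ x₃ x₄ : ℝ) : ℝ :=
  (∑ i₃ : Fin 2, ∑ i₄ : Fin 2, x₃ ^ (i₃ : ℕ) * x₄ ^ (i₄ : ℕ) * d.φ00 i₃ i₄)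
  + (∑ i₃ : Fin 2, ∑ i₄ : Fin 2, x₃ ^ (i₃ : ℕ) * x₄ ^ (i₄ : ℕ) *
      ∫ ξ₁ in (0:ℝ)..x₁, d.φ10 i₃ i₄ ξ₁)
  + (∑ i₄ : Fin 2, x₄ ^ (i₄ : ℕ) * ∫ ξ₃ in (0:ℝ)..x₃, (x₃ - ξ₃) * d.φ002 i₄ ξ₃)
  + (∑ i₃ : Fin 2, x₃ ^ (i₃ : ℕ) * ∫ ξ₄ in (0:ℝ)..x₄, (x₄ - ξ₄) * d.φ00d2 i₃ ξ₄)
  + (∑ i₄ : Fin 2, x₄ ^ (i₄ : ℕ) *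
      ∫ ξ₁ in (0:ℝ)..x₁, ∫ ξ₃ in (0:ℝ)..x₃, (x₃ - ξ₃) * d.φ102 i₄ ξ₁ ξ₃)
  + (∫ ξ₃ in (0:ℝ)..x₃, ∫ ξ₄ in (0:ℝ)..x₄, (x₃ - ξ₃) * (x₄ - ξ₄) * d.φ0022 ξ₃ ξ₄)
  + (∑ i₃ : Fin 2, x₃ ^ (i₃ : ℕ) *
      ∫ ξ₁ in (0:ℝ)..x₁, ∫ ξ₄ in (0:ℝ)..x₄, (x₄ - ξ₄) * d.φ10d2 i₃ ξ₁ ξ₄)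
  + ∫ ξ₁ in (0:ℝ)..x₁, ∫ ξ₃ in (0:ℝ)..x₃, ∫ ξ₄ in (0:ℝ)..x₄,
      (x₃ - ξ₃) * (x₄ - ξ₄) * d.φ1022 ξ₁ ξ₃ ξ₄

/-- The function `M_k(x₁,x₂,x₄)` (`ψ` for `k = 0`, `Φ` for `k = 1`). -/
noncomputable def GoursatData.M (d : GoursatData) (k : Fin 2) (x₁ x₂ x₄ : ℝ) : ℝ :=
  d.φ00 k 0 + x₄ * d.φ00 k 1
  + (∫ τ₁ in (0:ℝ)..x₁, d.φ10 k 0 τ₁) + x₄ * (∫ τ₁ in (0:ℝ)..x₁, d.φ10 k 1 τ₁)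
  + (∫ τ₂ in (0:ℝ)..x₂, d.φ01 k 0 τ₂) + x₄ * (∫ τ₂ in (0:ℝ)..x₂, d.φ01 k 1 τ₂)
  + (∫ τ₄ in (0:ℝ)..x₄, (x₄ - τ₄) * d.φ00d2 k τ₄)
  + (∫ τ₁ in (0:ℝ)..x₁, ∫ τ₂ in (0:ℝ)..x₂, d.φ11 k 0 τ₁ τ₂)
  + x₄ * (∫ τ₁ in (0:ℝ)..x₁, ∫ τ₂ in (0:ℝ)..x₂, d.φ11 k 1 τ₁ τ₂)
  + (∫ τ₂ in (0:ℝ)..x₂, ∫ τ₄ in (0:ℝ)..x₄, (x₄ - τ₄) * d.φ01d2 k τ₂ τ₄)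
  + (∫ τ₁ in (0:ℝ)..x₁, ∫ τ₄ in (0:ℝ)..x₄, (x₄ - τ₄) * d.φ10d2 k τ₁ τ₄)
  + ∫ τ₁ in (0:ℝ)..x₁, ∫ τ₂ in (0:ℝ)..x₂, ∫ τ₄ in (0:ℝ)..x₄,
      (x₄ - τ₄) * d.φ11d2 k τ₁ τ₂ τ₄

/-- The function `L_k(x₁,x₂,x₃)` (`T` for `k = 0`, `S` for `k = 1`). -/
noncomputable def GoursatData.L (d : GoursatData) (k : Fin 2) (x₁ x₂ x₃ : ℝ) : ℝ :=
  d.φ00 0 k + x₃ * d.φ00 1 k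
  + (∫ η₁ in (0:ℝ)..x₁, d.φ10 0 k η₁) + x₃ * (∫ η₁ in (0:ℝ)..x₁, d.φ10 1 k η₁)
  + (∫ η₂ in (0:ℝ)..x₂, d.φ01 0 k η₂) + x₃ * (∫ η₂ in (0:ℝ)..x₂, d.φ01 1 k η₂)
  + (∫ η₃ in (0:ℝ)..x₃, (x₃ - η₃) * d.φ002 k η₃)
  + (∫ η₁ in (0:ℝ)..x₁, ∫ η₂ in (0:ℝ)..x₂, d.φ11 0 k η₁ η₂)
  + x₃ * (∫ η₁ in (0:ℝ)..x₁, ∫ η₂ in (0:ℝ)..x₂, d.φ11 1 k η₁ η₂)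
  + (∫ η₂ in (0:ℝ)..x₂, ∫ η₃ in (0:ℝ)..x₃, (x₃ - η₃) * d.φ012 k η₂ η₃)
  + (∫ η₁ in (0:ℝ)..x₁, ∫ η₃ in (0:ℝ)..x₃, (x₃ - η₃) * d.φ102 k η₁ η₃)
  + ∫ η₁ in (0:ℝ)..x₁, ∫ η₂ in (0:ℝ)..x₂, ∫ η₃ in (0:ℝ)..x₃,
      (x₃ - η₃) * d.φ112 k η₁ η₂ η₃

/-- The function `g₀` of the integral representation: the part of a solution of
problem (1),(4) determined by the nonclassical Goursat data. -/
noncomputable def GoursatData.g0 (d : GoursatData) (x₁ x₂ x₃ x₄ : ℝ) : ℝ :=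
  (∑ i₃ : Fin 2, ∑ i₄ : Fin 2, x₃ ^ (i₃ : ℕ) * x₄ ^ (i₄ : ℕ) * d.φ00 i₃ i₄)
  + (∑ i₃ : Fin 2, ∑ i₄ : Fin 2, x₃ ^ (i₃ : ℕ) * x₄ ^ (i₄ : ℕ) *
      ∫ τ₁ in (0:ℝ)..x₁, d.φ10 i₃ i₄ τ₁)
  + (∑ i₃ : Fin 2, ∑ i₄ : Fin 2, x₃ ^ (i₃ : ℕ) * x₄ ^ (i₄ : ℕ) *
      ∫ τ₂ in (0:ℝ)..x₂, d.φ01 i₃ i₄ τ₂)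
  + (∑ i₄ : Fin 2, x₄ ^ (i₄ : ℕ) * ∫ τ₃ in (0:ℝ)..x₃, (x₃ - τ₃) * d.φ002 i₄ τ₃)
  + (∑ i₃ : Fin 2, x₃ ^ (i₃ : ℕ) * ∫ τ₄ in (0:ℝ)..x₄, (x₄ - τ₄) * d.φ00d2 i₃ τ₄)
  + (∑ i₃ : Fin 2, ∑ i₄ : Fin 2, x₃ ^ (i₃ : ℕ) * x₄ ^ (i₄ : ℕ) *
      ∫ τ₁ in (0:ℝ)..x₁, ∫ τ₂ in (0:ℝ)..x₂, d.φ11 i₃ i₄ τ₁ τ₂)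
  + (∑ i₄ : Fin 2, x₄ ^ (i₄ : ℕ) *
      ∫ τ₁ in (0:ℝ)..x₁, ∫ τ₃ in (0:ℝ)..x₃, (x₃ - τ₃) * d.φ102 i₄ τ₁ τ₃)
  + (∑ i₃ : Fin 2, x₃ ^ (i₃ : ℕ) *
      ∫ τ₁ in (0:ℝ)..x₁, ∫ τ₄ in (0:ℝ)..x₄, (x₄ - τ₄) * d.φ10d2 i₃ τ₁ τ₄)
  + (∑ i₄ : Fin 2, x₄ ^ (i₄ : ℕ) *
      ∫ τ₂ in (0:ℝ)..x₂, ∫ τ₃ in (0:ℝ)..x₃, (x₃ - τ₃) * d.φ012 i₄ τ₂ τ₃)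
  + (∑ i₃ : Fin 2, x₃ ^ (i₃ : ℕ) *
      ∫ τ₂ in (0:ℝ)..x₂, ∫ τ₄ in (0:ℝ)..x₄, (x₄ - τ₄) * d.φ01d2 i₃ τ₂ τ₄)
  + (∫ τ₃ in (0:ℝ)..x₃, ∫ τ₄ in (0:ℝ)..x₄, (x₃ - τ₃) * (x₄ - τ₄) * d.φ0022 τ₃ τ₄)
  + (∑ i₄ : Fin 2, x₄ ^ (i₄ : ℕ) *
      ∫ τ₁ in (0:ℝ)..x₁, ∫ τ₂ in (0:ℝ)..x₂, ∫ τ₃ in (0:ℝ)..x₃,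
        (x₃ - τ₃) * d.φ112 i₄ τ₁ τ₂ τ₃)
  + (∑ i₃ : Fin 2, x₃ ^ (i₃ : ℕ) *
      ∫ τ₁ in (0:ℝ)..x₁, ∫ τ₂ in (0:ℝ)..x₂, ∫ τ₄ in (0:ℝ)..x₄,
        (x₄ - τ₄) * d.φ11d2 i₃ τ₁ τ₂ τ₄)
  + (∫ τ₂ in (0:ℝ)..x₂, ∫ τ₃ in (0:ℝ)..x₃, ∫ τ₄ in (0:ℝ)..x₄,
      (x₃ - τ₃) * (x₄ - τ₄) * d.φ0122 τ₂ τ₃ τ₄)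
  + ∫ τ₁ in (0:ℝ)..x₁, ∫ τ₃ in (0:ℝ)..x₃, ∫ τ₄ in (0:ℝ)..x₄,
      (x₃ - τ₃) * (x₄ - τ₄) * d.φ1022 τ₁ τ₃ τ₄


open Asymptotics in
lemma sq_deriv_zero {f : ℝ → ℝ} {h C : ℝ}
    (hf0 : f 0 = 0) (hb : ∀ t ∈ Icc (0:ℝ) h, |f t| ≤ C * t ^ 2) :
    HasDerivWithinAt f 0 (Icc 0 h) 0 := by
  rw [hasDerivWithinAt_iff_isLittleO]
  simp only [sub_zero, smul_zero, hf0]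
  rw [Asymptotics.isLittleO_iff]
  intro c hc
  have hpos : (0:ℝ) < c / (|C| + 1) := by positivity
  filter_upwards [inter_mem_nhdsWithin (Icc 0 h) (Metric.ball_mem_nhds 0 hpos)]
    with t ht
  have h1 : |f t| ≤ C * t ^ 2 := hb t ht.1
  have h2 : |t| < c / (|C| + 1) := by
    simpa [Real.dist_eq] using ht.2
  have h3 : C * t ^ 2 ≤ |C| * (|t| * |t|) := by
    rw [abs_mul_abs_self]
    nlinarith [le_abs_self C, mul_self_nonneg t]
  have h4 : |C| * (|t| * |t|) ≤ (|C| + 1) * (c / (|C| + 1)) * |t| := by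
    have h6 : |t| * |t| ≤ (c / (|C| + 1)) * |t| :=
      mul_le_mul_of_nonneg_right h2.le (abs_nonneg t)
    nlinarith [h6, abs_nonneg C, mul_nonneg hpos.le (abs_nonneg t)]
  have h5 : (|C| + 1) * (c / (|C| + 1)) = c := by
    field_simp
  calc ‖f t‖ = |f t| := rfl
    _ ≤ (|C| + 1) * (c / (|C| + 1)) * |t| := le_trans h1 (h3.trans h4)
    _ = c * ‖t‖ := by rw [h5]; rfl

lemma goursat_bound1 {g : ℝ → ℝ} {C t h : ℝ}
    (hC : ∀ x ∈ Icc (0:ℝ) h, ‖g x‖ ≤ C) (ht : t ∈ Icc (0:ℝ) h) :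
    ‖∫ ξ in (0:ℝ)..t, (t - ξ) * g ξ‖ ≤ C * t ^ 2 := by
  have h0t : 0 ≤ t := ht.1
  calc ‖∫ ξ in (0:ℝ)..t, (t - ξ) * g ξ‖ ≤ (t * C) * |t - 0| := by
        apply intervalIntegral.norm_integral_le_of_norm_le_const
        intro x hx
        rw [Set.uIoc_of_le h0t] at hx
        have hg : ‖g x‖ ≤ C := hC x ⟨hx.1.le, hx.2.trans ht.2⟩
        rw [norm_mul]
        have hle : ‖t - x‖ ≤ t := by
          rw [Real.norm_eq_abs, abs_of_nonneg (by linarith [hx.2])]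
          linarith [hx.1]
        exact mul_le_mul hle hg (norm_nonneg _) h0t
    _ = C * t ^ 2 := by rw [sub_zero, abs_of_nonneg h0t]; ring

lemma goursat_bound2 {g : ℝ → ℝ → ℝ} {C t x₄ h h₄ : ℝ}
    (hC : ∀ p ∈ Icc (0:ℝ) h, ∀ q ∈ Icc (0:ℝ) h₄, ‖g p q‖ ≤ C)
    (hC0 : 0 ≤ C) (hh4 : 0 ≤ h₄)
    (ht : t ∈ Icc (0:ℝ) h) (hx₄ : x₄ ∈ Icc (0:ℝ) h₄) :
    ‖∫ ξ₃ in (0:ℝ)..t, ∫ ξ₄ in (0:ℝ)..x₄, (t - ξ₃) * (x₄ - ξ₄) * g ξ₃ ξ₄‖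
      ≤ C * h₄ ^ 2 * t ^ 2 := by
  have h0t : 0 ≤ t := ht.1
  have h04 : 0 ≤ x₄ := hx₄.1
  calc ‖∫ ξ₃ in (0:ℝ)..t, ∫ ξ₄ in (0:ℝ)..x₄, (t - ξ₃) * (x₄ - ξ₄) * g ξ₃ ξ₄‖
      ≤ (C * h₄ ^ 2 * t) * |t - 0| := by
        apply intervalIntegral.norm_integral_le_of_norm_le_const
        intro ξ₃ hξ₃
        rw [Set.uIoc_of_le h0t] at hξ₃
        have hξ₃' : ξ₃ ∈ Icc (0:ℝ) h := ⟨hξ₃.1.le, hξ₃.2.trans ht.2⟩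
        calc ‖∫ ξ₄ in (0:ℝ)..x₄, (t - ξ₃) * (x₄ - ξ₄) * g ξ₃ ξ₄‖
            ≤ (t * h₄ * C) * |x₄ - 0| := by
              apply intervalIntegral.norm_integral_le_of_norm_le_const
              intro ξ₄ hξ₄
              rw [Set.uIoc_of_le h04] at hξ₄
              have hξ₄' : ξ₄ ∈ Icc (0:ℝ) h₄ := ⟨hξ₄.1.le, hξ₄.2.trans hx₄.2⟩
              have hg := hC ξ₃ hξ₃' ξ₄ hξ₄'
              have h1 : ‖t - ξ₃‖ ≤ t := by
                rw [Real.norm_eq_abs, abs_of_nonneg (by linarith [hξ₃.2])]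
                linarith [hξ₃.1]
              have h2 : ‖x₄ - ξ₄‖ ≤ h₄ := by
                rw [Real.norm_eq_abs, abs_of_nonneg (by linarith [hξ₄.2])]
                linarith [hξ₄.1, hx₄.2]
              rw [norm_mul, norm_mul]
              exact mul_le_mul (mul_le_mul h1 h2 (norm_nonneg _) h0t) hg
                (norm_nonneg _) (by positivity)
          _ ≤ C * h₄ ^ 2 * t := by
              rw [sub_zero, abs_of_nonneg h04]
              nlinarith [mul_nonneg (mul_nonneg h0t hh4) hC0, hx₄.2, hx₄.1]
    _ = C * h₄ ^ 2 * t ^ 2 := by rw [sub_zero, abs_of_nonneg h0t]; ring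

/-- the compatibility condition `F_{x₃}(x₂,0,x₄) = Φ(0,x₂,x₄)`, where
`Φ = M₁`: the one-sided derivative of `x₃ ↦ F(x₂,x₃,x₄)` at `x₃ = 0` exists and
equals `M₁(0,x₂,x₄)`. -/
theorem goursat_compat_Fx3_Phi
    (h₁ h₂ h₃ h₄ : ℝ) (hh₁ : 0 < h₁) (hh₂ : 0 < h₂) (hh₃ : 0 < h₃) (hh₄ : 0 < h₄)
    (d : GoursatData) (hd : d.ContOn h₁ h₂ h₃ h₄) :
    ∀ x₂ ∈ Icc (0:ℝ) h₂, ∀ x₄ ∈ Icc (0:ℝ) h₄,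
      HasDerivWithinAt (fun t => d.F x₂ t x₄) (d.M 1 0 x₂ x₄) (Icc 0 h₃) 0 := by
  intro x₂ hx₂ x₄ hx₄
  obtain ⟨h10, h01, h002, h00d2, h11, h102, h10d2, h012, h01d2, h0022,
    h112, h11d2, h0122, h1022⟩ := hd
  set s : Set ℝ := Icc (0:ℝ) h₃ with hs
  -- the four "second order in t" pieces have one-sided derivative 0 at 0
  have key3 : ∀ i₄ : Fin 2,
      HasDerivWithinAt (fun t => ∫ ξ₃ in (0:ℝ)..t, (t - ξ₃) * d.φ002 i₄ ξ₃)
        0 s 0 := by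
    intro i₄
    obtain ⟨C, hC⟩ := isCompact_Icc.exists_bound_of_continuousOn (h002 i₄)
    exact sq_deriv_zero (by simp) (fun t ht => goursat_bound1 hC ht)
  have key5 : ∀ i₄ : Fin 2,
      HasDerivWithinAt
        (fun t => ∫ ξ₂ in (0:ℝ)..x₂, ∫ ξ₃ in (0:ℝ)..t,
          (t - ξ₃) * d.φ012 i₄ ξ₂ ξ₃) 0 s 0 := by
    intro i₄
    obtain ⟨C, hC⟩ :=
      (isCompact_Icc.prod isCompact_Icc).exists_bound_of_continuousOn (h012 i₄)
    have hC0 : 0 ≤ C := le_trans (norm_nonneg _)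
      (hC (0, 0) ⟨⟨le_refl _, hh₂.le⟩, ⟨le_refl _, hh₃.le⟩⟩)
    refine sq_deriv_zero (C := C * h₂) (by simp) (fun t ht => ?_)
    rw [← Real.norm_eq_abs]
    calc ‖∫ ξ₂ in (0:ℝ)..x₂, ∫ ξ₃ in (0:ℝ)..t, (t - ξ₃) * d.φ012 i₄ ξ₂ ξ₃‖
        ≤ (C * t ^ 2) * |x₂ - 0| := by
          apply intervalIntegral.norm_integral_le_of_norm_le_const
          intro ξ₂ hξ₂
          rw [Set.uIoc_of_le hx₂.1] at hξ₂
          exact goursat_bound1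
            (fun x hx => hC (ξ₂, x) ⟨⟨hξ₂.1.le, hξ₂.2.trans hx₂.2⟩, hx⟩) ht
      _ ≤ (C * h₂) * t ^ 2 := by
          rw [sub_zero, abs_of_nonneg hx₂.1]
          nlinarith [mul_nonneg hC0 (sq_nonneg t), hx₂.2]
  have key6 : HasDerivWithinAt
      (fun t => ∫ ξ₃ in (0:ℝ)..t, ∫ ξ₄ in (0:ℝ)..x₄,
        (t - ξ₃) * (x₄ - ξ₄) * d.φ0022 ξ₃ ξ₄) 0 s 0 := by
    obtain ⟨C, hC⟩ :=
      (isCompact_Icc.prod isCompact_Icc).exists_bound_of_continuousOn h0022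
    have hC0 : 0 ≤ C := le_trans (norm_nonneg _)
      (hC (0, 0) ⟨⟨le_refl _, hh₃.le⟩, ⟨le_refl _, hh₄.le⟩⟩)
    exact sq_deriv_zero (by simp) (fun t ht =>
      goursat_bound2 (fun p hp q hq => hC (p, q) ⟨hp, hq⟩) hC0 hh₄.le ht hx₄)
  have key8 : HasDerivWithinAt
      (fun t => ∫ ξ₂ in (0:ℝ)..x₂, ∫ ξ₃ in (0:ℝ)..t, ∫ ξ₄ in (0:ℝ)..x₄,
        (t - ξ₃) * (x₄ - ξ₄) * d.φ0122 ξ₂ ξ₃ ξ₄) 0 s 0 := by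
    obtain ⟨C, hC⟩ := (isCompact_Icc.prod
      (isCompact_Icc.prod isCompact_Icc)).exists_bound_of_continuousOn h0122
    have hC0 : 0 ≤ C := le_trans (norm_nonneg _)
      (hC (0, 0, 0) ⟨⟨le_refl _, hh₂.le⟩, ⟨le_refl _, hh₃.le⟩, ⟨le_refl _, hh₄.le⟩⟩)
    refine sq_deriv_zero (C := C * h₄ ^ 2 * h₂) (by simp) (fun t ht => ?_)
    rw [← Real.norm_eq_abs]
    calc ‖∫ ξ₂ in (0:ℝ)..x₂, ∫ ξ₃ in (0:ℝ)..t, ∫ ξ₄ in (0:ℝ)..x₄,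
            (t - ξ₃) * (x₄ - ξ₄) * d.φ0122 ξ₂ ξ₃ ξ₄‖
        ≤ (C * h₄ ^ 2 * t ^ 2) * |x₂ - 0| := by
          apply intervalIntegral.norm_integral_le_of_norm_le_const
          intro ξ₂ hξ₂
          rw [Set.uIoc_of_le hx₂.1] at hξ₂
          exact goursat_bound2
            (fun p hp q hq => hC (ξ₂, p, q) ⟨⟨hξ₂.1.le, hξ₂.2.trans hx₂.2⟩, hp, hq⟩)
            hC0 hh₄.le ht hx₄
      _ ≤ (C * h₄ ^ 2 * h₂) * t ^ 2 := by
          rw [sub_zero, abs_of_nonneg hx₂.1]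
          nlinarith [mul_nonneg (mul_nonneg hC0 (sq_nonneg h₄)) (sq_nonneg t), hx₂.2]
  -- the affine part
  have Haff : HasDerivWithinAt
      (fun t : ℝ =>
        (d.φ00 0 0 + x₄ * d.φ00 0 1 + (∫ ξ₂ in (0:ℝ)..x₂, d.φ01 0 0 ξ₂)
          + x₄ * (∫ ξ₂ in (0:ℝ)..x₂, d.φ01 0 1 ξ₂)
          + (∫ ξ₄ in (0:ℝ)..x₄, (x₄ - ξ₄) * d.φ00d2 0 ξ₄)
          + (∫ ξ₂ in (0:ℝ)..x₂, ∫ ξ₄ in (0:ℝ)..x₄, (x₄ - ξ₄) * d.φ01d2 0 ξ₂ ξ₄))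
        + t * (d.φ00 1 0 + x₄ * d.φ00 1 1 + (∫ ξ₂ in (0:ℝ)..x₂, d.φ01 1 0 ξ₂)
          + x₄ * (∫ ξ₂ in (0:ℝ)..x₂, d.φ01 1 1 ξ₂)
          + (∫ ξ₄ in (0:ℝ)..x₄, (x₄ - ξ₄) * d.φ00d2 1 ξ₄)
          + (∫ ξ₂ in (0:ℝ)..x₂, ∫ ξ₄ in (0:ℝ)..x₄, (x₄ - ξ₄) * d.φ01d2 1 ξ₂ ξ₄)))
      (d.φ00 1 0 + x₄ * d.φ00 1 1 + (∫ ξ₂ in (0:ℝ)..x₂, d.φ01 1 0 ξ₂)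
          + x₄ * (∫ ξ₂ in (0:ℝ)..x₂, d.φ01 1 1 ξ₂)
          + (∫ ξ₄ in (0:ℝ)..x₄, (x₄ - ξ₄) * d.φ00d2 1 ξ₄)
          + (∫ ξ₂ in (0:ℝ)..x₂, ∫ ξ₄ in (0:ℝ)..x₄, (x₄ - ξ₄) * d.φ01d2 1 ξ₂ ξ₄))
      s 0 := by
    refine (((hasDerivWithinAt_id (0:ℝ) s).mul_const _).const_add _).congr_deriv ?_
    simp
  have H := (((((Haff.add (key3 0)).add ((key3 1).const_mul x₄)).add
      (key5 0)).add ((key5 1).const_mul x₄)).add key6).add key8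
  have hD : d.M 1 0 x₂ x₄ =
      (d.φ00 1 0 + x₄ * d.φ00 1 1 + (∫ ξ₂ in (0:ℝ)..x₂, d.φ01 1 0 ξ₂)
          + x₄ * (∫ ξ₂ in (0:ℝ)..x₂, d.φ01 1 1 ξ₂)
          + (∫ ξ₄ in (0:ℝ)..x₄, (x₄ - ξ₄) * d.φ00d2 1 ξ₄)
          + (∫ ξ₂ in (0:ℝ)..x₂, ∫ ξ₄ in (0:ℝ)..x₄, (x₄ - ξ₄) * d.φ01d2 1 ξ₂ ξ₄))
        + 0 + x₄ * 0 + 0 + x₄ * 0 + 0 + 0 := by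
    first
    | (simp [GoursatData.M]; ring)
    | simp [GoursatData.M]
  rw [hD]
  refine H.congr (fun t ht => ?_) ?_ <;>
  · simp only [GoursatData.F, Fin.sum_univ_two, Fin.isValue, Fin.val_zero,
      Fin.val_one, pow_zero, pow_one, one_mul, Pi.add_apply]
    ring
end

section
/- For every (x₁, x₂) ∈ [0,h₁] × [0,h₂]: the function x₄ ↦ M₁(x₁, x₂, x₄) has a (one-sided) derivative at x₄ = 0, the function x₃ ↦ L₁(x₁, x₂, x₃) has a (one-sided) derivative at x₃ = 0, and these two derivatives are equal; i.e. the compatibility condition Φ_{x₄}(x₁, x₂, 0) = S_{x₃}(x₁, x₂, 0) holds, where Φ = M₁ and S = L₁. -/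
open MeasureTheory Set intervalIntegral

section Helpers

private lemma goursat_ibound (g : ℝ → ℝ) (t B : ℝ) (ht : 0 ≤ t)
    (hB : ∀ τ ∈ Icc (0:ℝ) t, |g τ| ≤ B) :
    |∫ τ in (0:ℝ)..t, (t - τ) * g τ| ≤ B * t ^ 2 := by
  have key : ∀ τ ∈ Set.uIoc (0:ℝ) t, ‖(t - τ) * g τ‖ ≤ t * B := by
    intro τ hτ
    rw [Set.uIoc_of_le ht] at hτ
    have h1 : |t - τ| ≤ t := by
      rw [abs_of_nonneg (by linarith [hτ.1, hτ.2] : (0:ℝ) ≤ t - τ)]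
      linarith [hτ.1]
    have h2 : |g τ| ≤ B := hB τ ⟨le_of_lt hτ.1, hτ.2⟩
    calc ‖(t - τ) * g τ‖ = |t - τ| * |g τ| := abs_mul _ _
      _ ≤ t * B := mul_le_mul h1 h2 (abs_nonneg _) ht
  have := intervalIntegral.norm_integral_le_of_norm_le_const key
  calc |∫ τ in (0:ℝ)..t, (t - τ) * g τ| ≤ t * B * |t - 0| := this
    _ = B * t ^ 2 := by rw [sub_zero, abs_of_nonneg ht]; ring

private lemma goursat_sq_deriv (f : ℝ → ℝ) (h C : ℝ) (hf0 : f 0 = 0)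
    (hb : ∀ t ∈ Icc (0:ℝ) h, |f t| ≤ C * t ^ 2) :
    HasDerivWithinAt f 0 (Icc 0 h) 0 := by
  rw [hasDerivWithinAt_iff_tendsto_slope]
  apply squeeze_zero_norm' (a := fun t : ℝ => C * |t|)
  · filter_upwards [self_mem_nhdsWithin] with t ht
    obtain ⟨htIcc, htne⟩ := ht
    have htpos : 0 < t := lt_of_le_of_ne htIcc.1 (Ne.symm (by simpa using htne))
    rw [slope_def_field, hf0, sub_zero, sub_zero, Real.norm_eq_abs, abs_div,
      abs_of_pos htpos, div_le_iff₀ htpos]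
    have := hb t htIcc
    nlinarith [this]
  · have : Filter.Tendsto (fun t : ℝ => C * |t|) (nhds 0) (nhds (C * |0|)) :=
      (continuous_const.mul continuous_abs).tendsto 0
    simpa using this.mono_left nhdsWithin_le_nhds

private lemma goursat_quadA (g : ℝ → ℝ) (h B : ℝ)
    (hB : ∀ τ ∈ Icc (0:ℝ) h, |g τ| ≤ B) :
    HasDerivWithinAt (fun t => ∫ τ in (0:ℝ)..t, (t - τ) * g τ) 0 (Icc 0 h) 0 := by
  apply goursat_sq_deriv _ h B (by simp)
  intro t ht
  exact goursat_ibound g t B ht.1 fun τ hτ => hB τ ⟨hτ.1, hτ.2.trans ht.2⟩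

private lemma goursat_quadB (g : ℝ → ℝ → ℝ) (a h B : ℝ) (ha : 0 ≤ a)
    (hB : ∀ σ ∈ Icc (0:ℝ) a, ∀ τ ∈ Icc (0:ℝ) h, |g σ τ| ≤ B) :
    HasDerivWithinAt (fun t => ∫ σ in (0:ℝ)..a, ∫ τ in (0:ℝ)..t, (t - τ) * g σ τ)
      0 (Icc 0 h) 0 := by
  apply goursat_sq_deriv _ h (B * a) (by simp)
  intro t ht
  have key : ∀ σ ∈ Set.uIoc (0:ℝ) a, ‖∫ τ in (0:ℝ)..t, (t - τ) * g σ τ‖ ≤ B * t ^ 2 := by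
    intro σ hσ
    rw [Set.uIoc_of_le ha] at hσ
    exact goursat_ibound (g σ) t B ht.1 fun τ hτ =>
      hB σ ⟨le_of_lt hσ.1, hσ.2⟩ τ ⟨hτ.1, hτ.2.trans ht.2⟩
  have := intervalIntegral.norm_integral_le_of_norm_le_const key
  calc |∫ σ in (0:ℝ)..a, ∫ τ in (0:ℝ)..t, (t - τ) * g σ τ|
      ≤ B * t ^ 2 * |a - 0| := this
    _ = B * a * t ^ 2 := by rw [sub_zero, abs_of_nonneg ha]; ring

private lemma goursat_quadC (g : ℝ → ℝ → ℝ → ℝ) (a b h B : ℝ) (ha : 0 ≤ a) (hb : 0 ≤ b)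
    (hB : ∀ ρ ∈ Icc (0:ℝ) a, ∀ σ ∈ Icc (0:ℝ) b, ∀ τ ∈ Icc (0:ℝ) h, |g ρ σ τ| ≤ B) :
    HasDerivWithinAt
      (fun t => ∫ ρ in (0:ℝ)..a, ∫ σ in (0:ℝ)..b, ∫ τ in (0:ℝ)..t, (t - τ) * g ρ σ τ)
      0 (Icc 0 h) 0 := by
  apply goursat_sq_deriv _ h (B * b * a) (by simp)
  intro t ht
  have key : ∀ ρ ∈ Set.uIoc (0:ℝ) a,
      ‖∫ σ in (0:ℝ)..b, ∫ τ in (0:ℝ)..t, (t - τ) * g ρ σ τ‖ ≤ B * t ^ 2 * b := by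
    intro ρ hρ
    rw [Set.uIoc_of_le ha] at hρ
    have key2 : ∀ σ ∈ Set.uIoc (0:ℝ) b,
        ‖∫ τ in (0:ℝ)..t, (t - τ) * g ρ σ τ‖ ≤ B * t ^ 2 := by
      intro σ hσ
      rw [Set.uIoc_of_le hb] at hσ
      exact goursat_ibound (g ρ σ) t B ht.1 fun τ hτ =>
        hB ρ ⟨le_of_lt hρ.1, hρ.2⟩ σ ⟨le_of_lt hσ.1, hσ.2⟩ τ ⟨hτ.1, hτ.2.trans ht.2⟩
    have := intervalIntegral.norm_integral_le_of_norm_le_const key2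
    calc ‖∫ σ in (0:ℝ)..b, ∫ τ in (0:ℝ)..t, (t - τ) * g ρ σ τ‖
        ≤ B * t ^ 2 * |b - 0| := this
      _ = B * t ^ 2 * b := by rw [sub_zero, abs_of_nonneg hb]
  have := intervalIntegral.norm_integral_le_of_norm_le_const key
  calc |∫ ρ in (0:ℝ)..a, ∫ σ in (0:ℝ)..b, ∫ τ in (0:ℝ)..t, (t - τ) * g ρ σ τ|
      ≤ B * t ^ 2 * b * |a - 0| := this
    _ = B * b * a * t ^ 2 := by rw [sub_zero, abs_of_nonneg ha]; ring

end Helpers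

/-- the compatibility condition `Φ_{x₄}(x₁,x₂,0) = S_{x₃}(x₁,x₂,0)`,
where `Φ = M₁` and `S = L₁`: both one-sided derivatives exist and are equal. -/
theorem goursat_compat_Phix4_Sx3
    (h₁ h₂ h₃ h₄ : ℝ) (hh₁ : 0 < h₁) (hh₂ : 0 < h₂) (hh₃ : 0 < h₃) (hh₄ : 0 < h₄)
    (d : GoursatData) (hd : d.ContOn h₁ h₂ h₃ h₄) :
    ∀ x₁ ∈ Icc (0:ℝ) h₁, ∀ x₂ ∈ Icc (0:ℝ) h₂,
      ∃ c : ℝ,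
        HasDerivWithinAt (fun t => d.M 1 x₁ x₂ t) c (Icc 0 h₄) 0 ∧
        HasDerivWithinAt (fun t => d.L 1 x₁ x₂ t) c (Icc 0 h₃) 0 := by
  intro x₁ hx₁ x₂ hx₂
  obtain ⟨h10, h01, h002, h00d2, h11, h102, h10d2, h012, h01d2, h0022, h112, h11d2,
    h0122, h1022⟩ := hd
  -- bounds
  obtain ⟨B7, hB7⟩ := isCompact_Icc.exists_bound_of_continuousOn (h00d2 1)
  obtain ⟨B10, hB10⟩ := (isCompact_Icc.prod isCompact_Icc).exists_bound_of_continuousOn (h01d2 1)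
  obtain ⟨B11, hB11⟩ := (isCompact_Icc.prod isCompact_Icc).exists_bound_of_continuousOn (h10d2 1)
  obtain ⟨B12, hB12⟩ := (isCompact_Icc.prod (isCompact_Icc.prod isCompact_Icc)).exists_bound_of_continuousOn (h11d2 1)
  obtain ⟨C7, hC7⟩ := isCompact_Icc.exists_bound_of_continuousOn (h002 1)
  obtain ⟨C10, hC10⟩ := (isCompact_Icc.prod isCompact_Icc).exists_bound_of_continuousOn (h012 1)
  obtain ⟨C11, hC11⟩ := (isCompact_Icc.prod isCompact_Icc).exists_bound_of_continuousOn (h102 1)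
  obtain ⟨C12, hC12⟩ := (isCompact_Icc.prod (isCompact_Icc.prod isCompact_Icc)).exists_bound_of_continuousOn (h112 1)
  set c : ℝ := d.φ00 1 1 + (∫ τ₁ in (0:ℝ)..x₁, d.φ10 1 1 τ₁)
    + (∫ τ₂ in (0:ℝ)..x₂, d.φ01 1 1 τ₂)
    + (∫ τ₁ in (0:ℝ)..x₁, ∫ τ₂ in (0:ℝ)..x₂, d.φ11 1 1 τ₁ τ₂) with hc
  refine ⟨c, ?_, ?_⟩
  · -- M side
    simp only [GoursatData.M]
    have l2 : HasDerivWithinAt (fun t : ℝ => t * d.φ00 1 1) (1 * d.φ00 1 1) (Icc 0 h₄) 0 :=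
      (hasDerivWithinAt_id (0:ℝ) (Icc 0 h₄)).mul_const _
    have l4 : HasDerivWithinAt (fun t : ℝ => t * ∫ τ₁ in (0:ℝ)..x₁, d.φ10 1 1 τ₁)
        (1 * ∫ τ₁ in (0:ℝ)..x₁, d.φ10 1 1 τ₁) (Icc 0 h₄) 0 :=
      (hasDerivWithinAt_id (0:ℝ) (Icc 0 h₄)).mul_const _
    have l6 : HasDerivWithinAt (fun t : ℝ => t * ∫ τ₂ in (0:ℝ)..x₂, d.φ01 1 1 τ₂)
        (1 * ∫ τ₂ in (0:ℝ)..x₂, d.φ01 1 1 τ₂) (Icc 0 h₄) 0 :=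
      (hasDerivWithinAt_id (0:ℝ) (Icc 0 h₄)).mul_const _
    have l9 : HasDerivWithinAt
        (fun t : ℝ => t * ∫ τ₁ in (0:ℝ)..x₁, ∫ τ₂ in (0:ℝ)..x₂, d.φ11 1 1 τ₁ τ₂)
        (1 * ∫ τ₁ in (0:ℝ)..x₁, ∫ τ₂ in (0:ℝ)..x₂, d.φ11 1 1 τ₁ τ₂) (Icc 0 h₄) 0 :=
      (hasDerivWithinAt_id (0:ℝ) (Icc 0 h₄)).mul_const _
    have q7 : HasDerivWithinAt (fun t => ∫ τ₄ in (0:ℝ)..t, (t - τ₄) * d.φ00d2 1 τ₄)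
        0 (Icc 0 h₄) 0 :=
      goursat_quadA _ h₄ B7 fun τ hτ => hB7 τ hτ
    have q10 : HasDerivWithinAt
        (fun t => ∫ τ₂ in (0:ℝ)..x₂, ∫ τ₄ in (0:ℝ)..t, (t - τ₄) * d.φ01d2 1 τ₂ τ₄)
        0 (Icc 0 h₄) 0 :=
      goursat_quadB _ x₂ h₄ B10 hx₂.1 fun σ hσ τ hτ =>
        hB10 (σ, τ) ⟨⟨hσ.1, hσ.2.trans hx₂.2⟩, hτ⟩
    have q11 : HasDerivWithinAt
        (fun t => ∫ τ₁ in (0:ℝ)..x₁, ∫ τ₄ in (0:ℝ)..t, (t - τ₄) * d.φ10d2 1 τ₁ τ₄)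
        0 (Icc 0 h₄) 0 :=
      goursat_quadB _ x₁ h₄ B11 hx₁.1 fun σ hσ τ hτ =>
        hB11 (σ, τ) ⟨⟨hσ.1, hσ.2.trans hx₁.2⟩, hτ⟩
    have q12 : HasDerivWithinAt
        (fun t => ∫ τ₁ in (0:ℝ)..x₁, ∫ τ₂ in (0:ℝ)..x₂, ∫ τ₄ in (0:ℝ)..t,
          (t - τ₄) * d.φ11d2 1 τ₁ τ₂ τ₄) 0 (Icc 0 h₄) 0 :=
      goursat_quadC _ x₁ x₂ h₄ B12 hx₁.1 hx₂.1 fun ρ hρ σ hσ τ hτ =>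
        hB12 (ρ, σ, τ) ⟨⟨hρ.1, hρ.2.trans hx₁.2⟩, ⟨hσ.1, hσ.2.trans hx₂.2⟩, hτ⟩
    have H := (((((((((((hasDerivWithinAt_const (0:ℝ) (Icc (0:ℝ) h₄) (d.φ00 1 0)).add
      l2).add (hasDerivWithinAt_const (0:ℝ) _ (∫ τ₁ in (0:ℝ)..x₁, d.φ10 1 0 τ₁))).add l4).add
      (hasDerivWithinAt_const (0:ℝ) _ (∫ τ₂ in (0:ℝ)..x₂, d.φ01 1 0 τ₂))).add l6).add q7).add
      (hasDerivWithinAt_const (0:ℝ) _ (∫ τ₁ in (0:ℝ)..x₁, ∫ τ₂ in (0:ℝ)..x₂, d.φ11 1 0 τ₁ τ₂))).add l9).add q10).add q11).add q12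
    exact H.congr_deriv (by rw [hc]; ring)
  · -- L side
    simp only [GoursatData.L]
    have l2 : HasDerivWithinAt (fun t : ℝ => t * d.φ00 1 1) (1 * d.φ00 1 1) (Icc 0 h₃) 0 :=
      (hasDerivWithinAt_id (0:ℝ) (Icc 0 h₃)).mul_const _
    have l4 : HasDerivWithinAt (fun t : ℝ => t * ∫ η₁ in (0:ℝ)..x₁, d.φ10 1 1 η₁)
        (1 * ∫ η₁ in (0:ℝ)..x₁, d.φ10 1 1 η₁) (Icc 0 h₃) 0 :=
      (hasDerivWithinAt_id (0:ℝ) (Icc 0 h₃)).mul_const _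
    have l6 : HasDerivWithinAt (fun t : ℝ => t * ∫ η₂ in (0:ℝ)..x₂, d.φ01 1 1 η₂)
        (1 * ∫ η₂ in (0:ℝ)..x₂, d.φ01 1 1 η₂) (Icc 0 h₃) 0 :=
      (hasDerivWithinAt_id (0:ℝ) (Icc 0 h₃)).mul_const _
    have l9 : HasDerivWithinAt
        (fun t : ℝ => t * ∫ η₁ in (0:ℝ)..x₁, ∫ η₂ in (0:ℝ)..x₂, d.φ11 1 1 η₁ η₂)
        (1 * ∫ η₁ in (0:ℝ)..x₁, ∫ η₂ in (0:ℝ)..x₂, d.φ11 1 1 η₁ η₂) (Icc 0 h₃) 0 :=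
      (hasDerivWithinAt_id (0:ℝ) (Icc 0 h₃)).mul_const _
    have q7 : HasDerivWithinAt (fun t => ∫ η₃ in (0:ℝ)..t, (t - η₃) * d.φ002 1 η₃)
        0 (Icc 0 h₃) 0 :=
      goursat_quadA _ h₃ C7 fun τ hτ => hC7 τ hτ
    have q10 : HasDerivWithinAt
        (fun t => ∫ η₂ in (0:ℝ)..x₂, ∫ η₃ in (0:ℝ)..t, (t - η₃) * d.φ012 1 η₂ η₃)
        0 (Icc 0 h₃) 0 :=
      goursat_quadB _ x₂ h₃ C10 hx₂.1 fun σ hσ τ hτ =>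
        hC10 (σ, τ) ⟨⟨hσ.1, hσ.2.trans hx₂.2⟩, hτ⟩
    have q11 : HasDerivWithinAt
        (fun t => ∫ η₁ in (0:ℝ)..x₁, ∫ η₃ in (0:ℝ)..t, (t - η₃) * d.φ102 1 η₁ η₃)
        0 (Icc 0 h₃) 0 :=
      goursat_quadB _ x₁ h₃ C11 hx₁.1 fun σ hσ τ hτ =>
        hC11 (σ, τ) ⟨⟨hσ.1, hσ.2.trans hx₁.2⟩, hτ⟩
    have q12 : HasDerivWithinAt
        (fun t => ∫ η₁ in (0:ℝ)..x₁, ∫ η₂ in (0:ℝ)..x₂, ∫ η₃ in (0:ℝ)..t,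
          (t - η₃) * d.φ112 1 η₁ η₂ η₃) 0 (Icc 0 h₃) 0 :=
      goursat_quadC _ x₁ x₂ h₃ C12 hx₁.1 hx₂.1 fun ρ hρ σ hσ τ hτ =>
        hC12 (ρ, σ, τ) ⟨⟨hρ.1, hρ.2.trans hx₁.2⟩, ⟨hσ.1, hσ.2.trans hx₂.2⟩, hτ⟩
    have H := (((((((((((hasDerivWithinAt_const (0:ℝ) (Icc (0:ℝ) h₃) (d.φ00 0 1)).add
      l2).add (hasDerivWithinAt_const (0:ℝ) _ (∫ η₁ in (0:ℝ)..x₁, d.φ10 0 1 η₁))).add l4).add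
      (hasDerivWithinAt_const (0:ℝ) _ (∫ η₂ in (0:ℝ)..x₂, d.φ01 0 1 η₂))).add l6).add q7).add
      (hasDerivWithinAt_const (0:ℝ) _ (∫ η₁ in (0:ℝ)..x₁, ∫ η₂ in (0:ℝ)..x₂, d.φ11 0 1 η₁ η₂))).add l9).add q10).add q11).add q12
    exact H.congr_deriv (by rw [hc]; ring)
end

section
/- The function g₀ satisfies the nonclassical Goursat condition V_{1,0,2,2}: applying to g₀ successively the partial derivative ∂/∂x₁, then ∂/∂x₃ twice, then ∂/∂x₄ twice (each derivative existing at every point of Ḡ, one-sidedly at boundary points), one obtains the function (x₁,x₂,x₃,x₄) ↦ φ_{1,0,2,2}(x₁,x₃,x₄); in particular D₁D₃²D₄² g₀(x₁, 0, x₃, x₄) = φ_{1,0,2,2}(x₁, x₃, x₄) for all (x₁,x₃,x₄) ∈ [0,h₁] × [0,h₃] × [0,h₄]. -/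
open MeasureTheory Set intervalIntegral

lemma exists_ext {X : Type*} [TopologicalSpace X] [NormalSpace X] {s : Set X}
    (hs : IsClosed s) {f : X → ℝ} (hf : ContinuousOn f s) :
    ∃ g : X → ℝ, Continuous g ∧ ∀ x ∈ s, g x = f x := by
  obtain ⟨g, hg⟩ := ContinuousMap.exists_restrict_eq hs ⟨s.restrict f, hf.restrict⟩
  exact ⟨g, g.continuous, fun x hx => by
    have := DFunLike.congr_fun hg ⟨x, hx⟩
    exact this⟩

lemma ftc0 {f : ℝ → ℝ} (hf : Continuous f) (x : ℝ) :
    HasDerivAt (fun t => ∫ τ in (0:ℝ)..t, f τ) (f x) x :=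
  intervalIntegral.integral_hasDerivAt_right (hf.intervalIntegrable 0 x)
    hf.stronglyMeasurable.stronglyMeasurableAtFilter hf.continuousAt

lemma kernel_deriv {f : ℝ → ℝ} (hf : Continuous f) (x : ℝ) :
    HasDerivAt (fun t => ∫ τ in (0:ℝ)..t, (t - τ) * f τ) (∫ τ in (0:ℝ)..x, f τ) x := by
  have hmul : Continuous fun τ : ℝ => τ * f τ := by fun_prop
  have hint : (fun t : ℝ => ∫ τ in (0:ℝ)..t, (t - τ) * f τ)
      = fun t => t * (∫ τ in (0:ℝ)..t, f τ) - ∫ τ in (0:ℝ)..t, τ * f τ := by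
    funext t
    rw [← intervalIntegral.integral_const_mul,
      ← intervalIntegral.integral_sub ((show Continuous fun τ => t * f τ from continuous_const.mul hf).intervalIntegrable _ _)
        (hmul.intervalIntegrable _ _)]
    congr 1; funext τ; ring
  rw [hint]
  have h1 := ((hasDerivAt_id x).mul (ftc0 hf x)).sub (ftc0 hmul x)
  refine h1.congr_deriv ?_
  simp

lemma contParam2 {X : Type*} [TopologicalSpace X] [FirstCountableTopology X]
    [LocallyCompactSpace X] {F : X → ℝ → ℝ}
    (hF : Continuous fun p : X × ℝ => F p.1 p.2)
    {b : ℝ} (hb : 0 ≤ b) : Continuous fun x => ∫ τ in (0:ℝ)..b, F x τ := by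
  have : (fun x => ∫ τ in (0:ℝ)..b, F x τ) = fun x => ∫ τ in Icc (0:ℝ) b, F x τ := by
    funext x
    rw [intervalIntegral.integral_of_le hb, ← MeasureTheory.integral_Icc_eq_integral_Ioc]
  rw [this]
  exact continuous_parametric_integral_of_continuous hF isCompact_Icc

lemma swap_int {F : ℝ → ℝ → ℝ} (hF : Continuous fun p : ℝ × ℝ => F p.1 p.2) {a b : ℝ}
    (ha : 0 ≤ a) (hb : 0 ≤ b) :
    (∫ x in (0:ℝ)..a, ∫ y in (0:ℝ)..b, F x y) = ∫ y in (0:ℝ)..b, ∫ x in (0:ℝ)..a, F x y := by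
  simp only [intervalIntegral.integral_of_le ha, intervalIntegral.integral_of_le hb]
  apply MeasureTheory.integral_integral_swap
  rw [Measure.prod_restrict]
  have h : MeasureTheory.IntegrableOn (fun p : ℝ × ℝ => F p.1 p.2) (Icc 0 a ×ˢ Icc 0 b)
      (volume.prod volume) := by
    rw [← Measure.volume_eq_prod]
    exact hF.continuousOn.integrableOn_compact (isCompact_Icc.prod isCompact_Icc)
  exact h.mono_set (prod_mono Ioc_subset_Icc_self Ioc_subset_Icc_self)

set_option maxHeartbeats 4000000 in
/-- `g₀` satisfies the nonclassical Goursat condition `V_{1,0,2,2}`: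
applying successively `∂/∂x₁`, then `∂/∂x₃` twice, then `∂/∂x₄` twice (each derivative
existing at every point of `Ḡ`, one-sidedly at boundary points) yields the function
`(x₁,x₂,x₃,x₄) ↦ φ_{1,0,2,2}(x₁,x₃,x₄)`; in particular
`D₁D₃²D₄² g₀(x₁,0,x₃,x₄) = φ_{1,0,2,2}(x₁,x₃,x₄)`. -/
theorem goursat_g0_condition_V1022
    (h₁ h₂ h₃ h₄ : ℝ) (hh₁ : 0 < h₁) (hh₂ : 0 < h₂) (hh₃ : 0 < h₃) (hh₄ : 0 < h₄)
    (d : GoursatData) (hd : d.ContOn h₁ h₂ h₃ h₄) :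
    ∃ u₁ u₂ u₃ u₄ : ℝ → ℝ → ℝ → ℝ → ℝ,
      (∀ x₁ ∈ Icc (0:ℝ) h₁, ∀ x₂ ∈ Icc (0:ℝ) h₂, ∀ x₃ ∈ Icc (0:ℝ) h₃, ∀ x₄ ∈ Icc (0:ℝ) h₄,
        HasDerivWithinAt (fun t => d.g0 t x₂ x₃ x₄) (u₁ x₁ x₂ x₃ x₄) (Icc 0 h₁) x₁) ∧
      (∀ x₁ ∈ Icc (0:ℝ) h₁, ∀ x₂ ∈ Icc (0:ℝ) h₂, ∀ x₃ ∈ Icc (0:ℝ) h₃, ∀ x₄ ∈ Icc (0:ℝ) h₄,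
        HasDerivWithinAt (fun t => u₁ x₁ x₂ t x₄) (u₂ x₁ x₂ x₃ x₄) (Icc 0 h₃) x₃) ∧
      (∀ x₁ ∈ Icc (0:ℝ) h₁, ∀ x₂ ∈ Icc (0:ℝ) h₂, ∀ x₃ ∈ Icc (0:ℝ) h₃, ∀ x₄ ∈ Icc (0:ℝ) h₄,
        HasDerivWithinAt (fun t => u₂ x₁ x₂ t x₄) (u₃ x₁ x₂ x₃ x₄) (Icc 0 h₃) x₃) ∧
      (∀ x₁ ∈ Icc (0:ℝ) h₁, ∀ x₂ ∈ Icc (0:ℝ) h₂, ∀ x₃ ∈ Icc (0:ℝ) h₃, ∀ x₄ ∈ Icc (0:ℝ) h₄,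
        HasDerivWithinAt (fun t => u₃ x₁ x₂ x₃ t) (u₄ x₁ x₂ x₃ x₄) (Icc 0 h₄) x₄) ∧
      (∀ x₁ ∈ Icc (0:ℝ) h₁, ∀ x₂ ∈ Icc (0:ℝ) h₂, ∀ x₃ ∈ Icc (0:ℝ) h₃, ∀ x₄ ∈ Icc (0:ℝ) h₄,
        HasDerivWithinAt (fun t => u₄ x₁ x₂ x₃ t) (d.φ1022 x₁ x₃ x₄) (Icc 0 h₄) x₄) := by
  obtain ⟨h10, h01, h002, h00d2, h11, h102, h10d2, h012, h01d2, h0022, h112, h11d2,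
    h0122, h1022⟩ := hd
  choose ψ10 c10 e10 using fun i₃ i₄ : Fin 2 => exists_ext isClosed_Icc (h10 i₃ i₄)
  choose ψ11 c11 e11 using fun i₃ i₄ : Fin 2 =>
    exists_ext (isClosed_Icc.prod isClosed_Icc) (h11 i₃ i₄)
  choose ψ102 c102 e102 using fun i₄ : Fin 2 =>
    exists_ext (isClosed_Icc.prod isClosed_Icc) (h102 i₄)
  choose ψ10d2 c10d2 e10d2 using fun i₃ : Fin 2 =>
    exists_ext (isClosed_Icc.prod isClosed_Icc) (h10d2 i₃)
  choose ψ112 c112 e112 using fun i₄ : Fin 2 =>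
    exists_ext (isClosed_Icc.prod (isClosed_Icc.prod isClosed_Icc)) (h112 i₄)
  choose ψ11d2 c11d2 e11d2 using fun i₃ : Fin 2 =>
    exists_ext (isClosed_Icc.prod (isClosed_Icc.prod isClosed_Icc)) (h11d2 i₃)
  obtain ⟨ψ1022, c1022, e1022⟩ :=
    exists_ext (isClosed_Icc.prod (isClosed_Icc.prod isClosed_Icc)) h1022
  refine ⟨
    fun y₁ y₂ y₃ y₄ =>
      (ψ10 0 0 y₁ + y₄ * ψ10 0 1 y₁ + y₃ * ψ10 1 0 y₁ + y₃ * (y₄ * ψ10 1 1 y₁))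
      + ((∫ τ₂ in (0:ℝ)..y₂, ψ11 0 0 (y₁, τ₂)) + y₄ * (∫ τ₂ in (0:ℝ)..y₂, ψ11 0 1 (y₁, τ₂))
          + y₃ * (∫ τ₂ in (0:ℝ)..y₂, ψ11 1 0 (y₁, τ₂))
          + y₃ * (y₄ * ∫ τ₂ in (0:ℝ)..y₂, ψ11 1 1 (y₁, τ₂)))
      + ((∫ τ₃ in (0:ℝ)..y₃, (y₃ - τ₃) * ψ102 0 (y₁, τ₃))
          + y₄ * ∫ τ₃ in (0:ℝ)..y₃, (y₃ - τ₃) * ψ102 1 (y₁, τ₃))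
      + ((∫ τ₄ in (0:ℝ)..y₄, (y₄ - τ₄) * ψ10d2 0 (y₁, τ₄))
          + y₃ * ∫ τ₄ in (0:ℝ)..y₄, (y₄ - τ₄) * ψ10d2 1 (y₁, τ₄))
      + ((∫ τ₂ in (0:ℝ)..y₂, ∫ τ₃ in (0:ℝ)..y₃, (y₃ - τ₃) * ψ112 0 (y₁, τ₂, τ₃))
          + y₄ * ∫ τ₂ in (0:ℝ)..y₂, ∫ τ₃ in (0:ℝ)..y₃, (y₃ - τ₃) * ψ112 1 (y₁, τ₂, τ₃))
      + ((∫ τ₂ in (0:ℝ)..y₂, ∫ τ₄ in (0:ℝ)..y₄, (y₄ - τ₄) * ψ11d2 0 (y₁, τ₂, τ₄))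
          + y₃ * ∫ τ₂ in (0:ℝ)..y₂, ∫ τ₄ in (0:ℝ)..y₄, (y₄ - τ₄) * ψ11d2 1 (y₁, τ₂, τ₄))
      + ∫ τ₃ in (0:ℝ)..y₃, ∫ τ₄ in (0:ℝ)..y₄, (y₃ - τ₃) * ((y₄ - τ₄) * ψ1022 (y₁, τ₃, τ₄)),
    fun y₁ y₂ y₃ y₄ =>
      (ψ10 1 0 y₁ + y₄ * ψ10 1 1 y₁)
      + ((∫ τ₂ in (0:ℝ)..y₂, ψ11 1 0 (y₁, τ₂)) + y₄ * ∫ τ₂ in (0:ℝ)..y₂, ψ11 1 1 (y₁, τ₂))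
      + ((∫ τ₃ in (0:ℝ)..y₃, ψ102 0 (y₁, τ₃)) + y₄ * ∫ τ₃ in (0:ℝ)..y₃, ψ102 1 (y₁, τ₃))
      + (∫ τ₄ in (0:ℝ)..y₄, (y₄ - τ₄) * ψ10d2 1 (y₁, τ₄))
      + ((∫ τ₃ in (0:ℝ)..y₃, ∫ τ₂ in (0:ℝ)..y₂, ψ112 0 (y₁, τ₂, τ₃))
          + y₄ * ∫ τ₃ in (0:ℝ)..y₃, ∫ τ₂ in (0:ℝ)..y₂, ψ112 1 (y₁, τ₂, τ₃))
      + (∫ τ₂ in (0:ℝ)..y₂, ∫ τ₄ in (0:ℝ)..y₄, (y₄ - τ₄) * ψ11d2 1 (y₁, τ₂, τ₄))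
      + ∫ τ₃ in (0:ℝ)..y₃, ∫ τ₄ in (0:ℝ)..y₄, (y₄ - τ₄) * ψ1022 (y₁, τ₃, τ₄),
    fun y₁ y₂ y₃ y₄ =>
      (ψ102 0 (y₁, y₃) + y₄ * ψ102 1 (y₁, y₃))
      + ((∫ τ₂ in (0:ℝ)..y₂, ψ112 0 (y₁, τ₂, y₃))
          + y₄ * ∫ τ₂ in (0:ℝ)..y₂, ψ112 1 (y₁, τ₂, y₃))
      + ∫ τ₄ in (0:ℝ)..y₄, (y₄ - τ₄) * ψ1022 (y₁, y₃, τ₄),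
    fun y₁ y₂ y₃ y₄ =>
      ψ102 1 (y₁, y₃) + (∫ τ₂ in (0:ℝ)..y₂, ψ112 1 (y₁, τ₂, y₃))
      + ∫ τ₄ in (0:ℝ)..y₄, ψ1022 (y₁, y₃, τ₄),
    ?_, ?_, ?_, ?_, ?_⟩ <;>
    intro x₁ hx₁ x₂ hx₂ x₃ hx₃ x₄ hx₄ <;> beta_reduce
  · -- derivative of g0 in x₁
    have a11 : ∀ i₃ i₄ : Fin 2,
        Continuous fun τ₁ => ∫ τ₂ in (0:ℝ)..x₂, ψ11 i₃ i₄ (τ₁, τ₂) := fun i₃ i₄ =>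
      contParam2 (by fun_prop) hx₂.1
    have a102 : ∀ i₄ : Fin 2,
        Continuous fun τ₁ => ∫ τ₃ in (0:ℝ)..x₃, (x₃ - τ₃) * ψ102 i₄ (τ₁, τ₃) := fun i₄ =>
      contParam2 (by fun_prop) hx₃.1
    have a10d2 : ∀ i₃ : Fin 2,
        Continuous fun τ₁ => ∫ τ₄ in (0:ℝ)..x₄, (x₄ - τ₄) * ψ10d2 i₃ (τ₁, τ₄) := fun i₃ =>
      contParam2 (by fun_prop) hx₄.1
    have a112 : ∀ i₄ : Fin 2, Continuous fun τ₁ =>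
        ∫ τ₂ in (0:ℝ)..x₂, ∫ τ₃ in (0:ℝ)..x₃, (x₃ - τ₃) * ψ112 i₄ (τ₁, τ₂, τ₃) := fun i₄ =>
      contParam2 (contParam2 (X := ℝ × ℝ) (by fun_prop) hx₃.1) hx₂.1
    have a11d2 : ∀ i₃ : Fin 2, Continuous fun τ₁ =>
        ∫ τ₂ in (0:ℝ)..x₂, ∫ τ₄ in (0:ℝ)..x₄, (x₄ - τ₄) * ψ11d2 i₃ (τ₁, τ₂, τ₄) := fun i₃ =>
      contParam2 (contParam2 (X := ℝ × ℝ) (by fun_prop) hx₄.1) hx₂.1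
    have a1022 : Continuous fun τ₁ =>
        ∫ τ₃ in (0:ℝ)..x₃, ∫ τ₄ in (0:ℝ)..x₄, (x₃ - τ₃) * ((x₄ - τ₄) * ψ1022 (τ₁, τ₃, τ₄)) :=
      contParam2 (contParam2 (X := ℝ × ℝ) (by fun_prop) hx₄.1) hx₃.1
    have F10 : ∀ i₃ i₄ : Fin 2, HasDerivAt (fun t : ℝ => ∫ τ₁ in (0:ℝ)..t, ψ10 i₃ i₄ τ₁)
        (ψ10 i₃ i₄ x₁) x₁ := fun i₃ i₄ => ftc0 (c10 i₃ i₄) x₁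
    have F11 : ∀ i₃ i₄ : Fin 2, HasDerivAt
        (fun t : ℝ => ∫ τ₁ in (0:ℝ)..t, ∫ τ₂ in (0:ℝ)..x₂, ψ11 i₃ i₄ (τ₁, τ₂))
        (∫ τ₂ in (0:ℝ)..x₂, ψ11 i₃ i₄ (x₁, τ₂)) x₁ := fun i₃ i₄ => ftc0 (a11 i₃ i₄) x₁
    have F102 : ∀ i₄ : Fin 2, HasDerivAt
        (fun t : ℝ => ∫ τ₁ in (0:ℝ)..t, ∫ τ₃ in (0:ℝ)..x₃, (x₃ - τ₃) * ψ102 i₄ (τ₁, τ₃))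
        (∫ τ₃ in (0:ℝ)..x₃, (x₃ - τ₃) * ψ102 i₄ (x₁, τ₃)) x₁ := fun i₄ => ftc0 (a102 i₄) x₁
    have F10d2 : ∀ i₃ : Fin 2, HasDerivAt
        (fun t : ℝ => ∫ τ₁ in (0:ℝ)..t, ∫ τ₄ in (0:ℝ)..x₄, (x₄ - τ₄) * ψ10d2 i₃ (τ₁, τ₄))
        (∫ τ₄ in (0:ℝ)..x₄, (x₄ - τ₄) * ψ10d2 i₃ (x₁, τ₄)) x₁ := fun i₃ => ftc0 (a10d2 i₃) x₁
    have F112 : ∀ i₄ : Fin 2, HasDerivAt (fun t : ℝ => ∫ τ₁ in (0:ℝ)..t,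
          ∫ τ₂ in (0:ℝ)..x₂, ∫ τ₃ in (0:ℝ)..x₃, (x₃ - τ₃) * ψ112 i₄ (τ₁, τ₂, τ₃))
        (∫ τ₂ in (0:ℝ)..x₂, ∫ τ₃ in (0:ℝ)..x₃, (x₃ - τ₃) * ψ112 i₄ (x₁, τ₂, τ₃)) x₁ :=
      fun i₄ => ftc0 (a112 i₄) x₁
    have F11d2 : ∀ i₃ : Fin 2, HasDerivAt (fun t : ℝ => ∫ τ₁ in (0:ℝ)..t,
          ∫ τ₂ in (0:ℝ)..x₂, ∫ τ₄ in (0:ℝ)..x₄, (x₄ - τ₄) * ψ11d2 i₃ (τ₁, τ₂, τ₄))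
        (∫ τ₂ in (0:ℝ)..x₂, ∫ τ₄ in (0:ℝ)..x₄, (x₄ - τ₄) * ψ11d2 i₃ (x₁, τ₂, τ₄)) x₁ :=
      fun i₃ => ftc0 (a11d2 i₃) x₁
    have F1022 : HasDerivAt (fun t : ℝ => ∫ τ₁ in (0:ℝ)..t,
          ∫ τ₃ in (0:ℝ)..x₃, ∫ τ₄ in (0:ℝ)..x₄, (x₃ - τ₃) * ((x₄ - τ₄) * ψ1022 (τ₁, τ₃, τ₄)))
        (∫ τ₃ in (0:ℝ)..x₃, ∫ τ₄ in (0:ℝ)..x₄, (x₃ - τ₃) * ((x₄ - τ₄) * ψ1022 (x₁, τ₃, τ₄)))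
        x₁ := ftc0 a1022 x₁
    have HD := (hasDerivAt_const x₁ (d.g0 0 x₂ x₃ x₄)).add
      (((((((((F10 0 0).add ((F10 0 1).const_mul x₄)).add
            ((F10 1 0).const_mul x₃)).add (((F10 1 1).const_mul x₄).const_mul x₃)).add
        ((((F11 0 0).add ((F11 0 1).const_mul x₄)).add
            ((F11 1 0).const_mul x₃)).add (((F11 1 1).const_mul x₄).const_mul x₃))).add
        ((F102 0).add ((F102 1).const_mul x₄))).add
        ((F10d2 0).add ((F10d2 1).const_mul x₃))).add
        (((F112 0).add ((F112 1).const_mul x₄)).add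
          ((F11d2 0).add ((F11d2 1).const_mul x₃)))).add F1022)
    have key : ∀ t ∈ Icc (0:ℝ) h₁, d.g0 t x₂ x₃ x₄ = d.g0 0 x₂ x₃ x₄ +
        (((∫ τ₁ in (0:ℝ)..t, ψ10 0 0 τ₁) + x₄ * (∫ τ₁ in (0:ℝ)..t, ψ10 0 1 τ₁)
            + x₃ * (∫ τ₁ in (0:ℝ)..t, ψ10 1 0 τ₁)
            + x₃ * (x₄ * ∫ τ₁ in (0:ℝ)..t, ψ10 1 1 τ₁))
          + ((∫ τ₁ in (0:ℝ)..t, ∫ τ₂ in (0:ℝ)..x₂, ψ11 0 0 (τ₁, τ₂))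
            + x₄ * (∫ τ₁ in (0:ℝ)..t, ∫ τ₂ in (0:ℝ)..x₂, ψ11 0 1 (τ₁, τ₂))
            + x₃ * (∫ τ₁ in (0:ℝ)..t, ∫ τ₂ in (0:ℝ)..x₂, ψ11 1 0 (τ₁, τ₂))
            + x₃ * (x₄ * ∫ τ₁ in (0:ℝ)..t, ∫ τ₂ in (0:ℝ)..x₂, ψ11 1 1 (τ₁, τ₂)))
          + ((∫ τ₁ in (0:ℝ)..t, ∫ τ₃ in (0:ℝ)..x₃, (x₃ - τ₃) * ψ102 0 (τ₁, τ₃))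
            + x₄ * ∫ τ₁ in (0:ℝ)..t, ∫ τ₃ in (0:ℝ)..x₃, (x₃ - τ₃) * ψ102 1 (τ₁, τ₃))
          + ((∫ τ₁ in (0:ℝ)..t, ∫ τ₄ in (0:ℝ)..x₄, (x₄ - τ₄) * ψ10d2 0 (τ₁, τ₄))
            + x₃ * ∫ τ₁ in (0:ℝ)..t, ∫ τ₄ in (0:ℝ)..x₄, (x₄ - τ₄) * ψ10d2 1 (τ₁, τ₄))
          + (((∫ τ₁ in (0:ℝ)..t, ∫ τ₂ in (0:ℝ)..x₂, ∫ τ₃ in (0:ℝ)..x₃,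
                (x₃ - τ₃) * ψ112 0 (τ₁, τ₂, τ₃))
            + x₄ * ∫ τ₁ in (0:ℝ)..t, ∫ τ₂ in (0:ℝ)..x₂, ∫ τ₃ in (0:ℝ)..x₃,
                (x₃ - τ₃) * ψ112 1 (τ₁, τ₂, τ₃))
            + ((∫ τ₁ in (0:ℝ)..t, ∫ τ₂ in (0:ℝ)..x₂, ∫ τ₄ in (0:ℝ)..x₄,
                (x₄ - τ₄) * ψ11d2 0 (τ₁, τ₂, τ₄))
              + x₃ * ∫ τ₁ in (0:ℝ)..t, ∫ τ₂ in (0:ℝ)..x₂, ∫ τ₄ in (0:ℝ)..x₄,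
                (x₄ - τ₄) * ψ11d2 1 (τ₁, τ₂, τ₄)))
          + ∫ τ₁ in (0:ℝ)..t, ∫ τ₃ in (0:ℝ)..x₃, ∫ τ₄ in (0:ℝ)..x₄,
              (x₃ - τ₃) * ((x₄ - τ₄) * ψ1022 (τ₁, τ₃, τ₄))) := by
      intro t ht
      have m1 : ∀ τ ∈ uIcc (0:ℝ) t, τ ∈ Icc (0:ℝ) h₁ := fun τ hτ =>
        Icc_subset_Icc_right ht.2 (by rwa [uIcc_of_le ht.1] at hτ)
      have m2 : ∀ τ ∈ uIcc (0:ℝ) x₂, τ ∈ Icc (0:ℝ) h₂ := fun τ hτ =>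
        Icc_subset_Icc_right hx₂.2 (by rwa [uIcc_of_le hx₂.1] at hτ)
      have m3 : ∀ τ ∈ uIcc (0:ℝ) x₃, τ ∈ Icc (0:ℝ) h₃ := fun τ hτ =>
        Icc_subset_Icc_right hx₃.2 (by rwa [uIcc_of_le hx₃.1] at hτ)
      have m4 : ∀ τ ∈ uIcc (0:ℝ) x₄, τ ∈ Icc (0:ℝ) h₄ := fun τ hτ =>
        Icc_subset_Icc_right hx₄.2 (by rwa [uIcc_of_le hx₄.1] at hτ)
      have r10 : ∀ i₃ i₄ : Fin 2, (∫ τ₁ in (0:ℝ)..t, d.φ10 i₃ i₄ τ₁)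
          = ∫ τ₁ in (0:ℝ)..t, ψ10 i₃ i₄ τ₁ := fun i₃ i₄ =>
        intervalIntegral.integral_congr fun τ hτ => (e10 i₃ i₄ τ (m1 τ hτ)).symm
      have r11 : ∀ i₃ i₄ : Fin 2, (∫ τ₁ in (0:ℝ)..t, ∫ τ₂ in (0:ℝ)..x₂, d.φ11 i₃ i₄ τ₁ τ₂)
          = ∫ τ₁ in (0:ℝ)..t, ∫ τ₂ in (0:ℝ)..x₂, ψ11 i₃ i₄ (τ₁, τ₂) := fun i₃ i₄ =>
        intervalIntegral.integral_congr fun τ₁ h1 =>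
          intervalIntegral.integral_congr fun τ₂ h2 =>
            (e11 i₃ i₄ (τ₁, τ₂) ⟨m1 τ₁ h1, m2 τ₂ h2⟩).symm
      have r102 : ∀ i₄ : Fin 2,
          (∫ τ₁ in (0:ℝ)..t, ∫ τ₃ in (0:ℝ)..x₃, (x₃ - τ₃) * d.φ102 i₄ τ₁ τ₃)
          = ∫ τ₁ in (0:ℝ)..t, ∫ τ₃ in (0:ℝ)..x₃, (x₃ - τ₃) * ψ102 i₄ (τ₁, τ₃) := fun i₄ =>
        intervalIntegral.integral_congr fun τ₁ h1 =>
          intervalIntegral.integral_congr fun τ₃ h3 => by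
            rw [e102 i₄ (τ₁, τ₃) ⟨m1 τ₁ h1, m3 τ₃ h3⟩]
      have r10d2 : ∀ i₃ : Fin 2,
          (∫ τ₁ in (0:ℝ)..t, ∫ τ₄ in (0:ℝ)..x₄, (x₄ - τ₄) * d.φ10d2 i₃ τ₁ τ₄)
          = ∫ τ₁ in (0:ℝ)..t, ∫ τ₄ in (0:ℝ)..x₄, (x₄ - τ₄) * ψ10d2 i₃ (τ₁, τ₄) := fun i₃ =>
        intervalIntegral.integral_congr fun τ₁ h1 =>
          intervalIntegral.integral_congr fun τ₄ h4 => by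
            rw [e10d2 i₃ (τ₁, τ₄) ⟨m1 τ₁ h1, m4 τ₄ h4⟩]
      have r112 : ∀ i₄ : Fin 2, (∫ τ₁ in (0:ℝ)..t, ∫ τ₂ in (0:ℝ)..x₂, ∫ τ₃ in (0:ℝ)..x₃,
            (x₃ - τ₃) * d.φ112 i₄ τ₁ τ₂ τ₃)
          = ∫ τ₁ in (0:ℝ)..t, ∫ τ₂ in (0:ℝ)..x₂, ∫ τ₃ in (0:ℝ)..x₃,
            (x₃ - τ₃) * ψ112 i₄ (τ₁, τ₂, τ₃) := fun i₄ =>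
        intervalIntegral.integral_congr fun τ₁ h1 =>
          intervalIntegral.integral_congr fun τ₂ h2 =>
            intervalIntegral.integral_congr fun τ₃ h3 => by
              rw [e112 i₄ (τ₁, τ₂, τ₃) ⟨m1 τ₁ h1, m2 τ₂ h2, m3 τ₃ h3⟩]
      have r11d2 : ∀ i₃ : Fin 2, (∫ τ₁ in (0:ℝ)..t, ∫ τ₂ in (0:ℝ)..x₂, ∫ τ₄ in (0:ℝ)..x₄,
            (x₄ - τ₄) * d.φ11d2 i₃ τ₁ τ₂ τ₄)
          = ∫ τ₁ in (0:ℝ)..t, ∫ τ₂ in (0:ℝ)..x₂, ∫ τ₄ in (0:ℝ)..x₄,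
            (x₄ - τ₄) * ψ11d2 i₃ (τ₁, τ₂, τ₄) := fun i₃ =>
        intervalIntegral.integral_congr fun τ₁ h1 =>
          intervalIntegral.integral_congr fun τ₂ h2 =>
            intervalIntegral.integral_congr fun τ₄ h4 => by
              rw [e11d2 i₃ (τ₁, τ₂, τ₄) ⟨m1 τ₁ h1, m2 τ₂ h2, m4 τ₄ h4⟩]
      have r1022 : (∫ τ₁ in (0:ℝ)..t, ∫ τ₃ in (0:ℝ)..x₃, ∫ τ₄ in (0:ℝ)..x₄,
            (x₃ - τ₃) * (x₄ - τ₄) * d.φ1022 τ₁ τ₃ τ₄)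
          = ∫ τ₁ in (0:ℝ)..t, ∫ τ₃ in (0:ℝ)..x₃, ∫ τ₄ in (0:ℝ)..x₄,
            (x₃ - τ₃) * ((x₄ - τ₄) * ψ1022 (τ₁, τ₃, τ₄)) :=
        intervalIntegral.integral_congr fun τ₁ h1 =>
          intervalIntegral.integral_congr fun τ₃ h3 =>
            intervalIntegral.integral_congr fun τ₄ h4 => by
              rw [e1022 (τ₁, τ₃, τ₄) ⟨m1 τ₁ h1, m3 τ₃ h3, m4 τ₄ h4⟩]; ring
      simp only [GoursatData.g0, Fin.sum_univ_two, Fin.isValue, Fin.val_zero, Fin.val_one, pow_zero, pow_one, one_mul,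
        intervalIntegral.integral_same, mul_zero, zero_add, add_zero]
      rw [r10 0 0, r10 0 1, r10 1 0, r10 1 1, r11 0 0, r11 0 1, r11 1 0, r11 1 1,
        r102 0, r102 1, r10d2 0, r10d2 1, r112 0, r112 1, r11d2 0, r11d2 1, r1022]
      ring
    exact ((HD.hasDerivWithinAt).congr key (key x₁ hx₁)).congr_deriv (by ring)
  · -- first derivative in x₃
    have K102 : ∀ i₄ : Fin 2, HasDerivAt
        (fun t : ℝ => ∫ τ₃ in (0:ℝ)..t, (t - τ₃) * ψ102 i₄ (x₁, τ₃))
        (∫ τ₃ in (0:ℝ)..x₃, ψ102 i₄ (x₁, τ₃)) x₃ := fun i₄ => kernel_deriv (by fun_prop) x₃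
    have K112 : ∀ i₄ : Fin 2, HasDerivAt
        (fun t : ℝ => ∫ τ₃ in (0:ℝ)..t, (t - τ₃) * ∫ τ₂ in (0:ℝ)..x₂, ψ112 i₄ (x₁, τ₂, τ₃))
        (∫ τ₃ in (0:ℝ)..x₃, ∫ τ₂ in (0:ℝ)..x₂, ψ112 i₄ (x₁, τ₂, τ₃)) x₃ := fun i₄ =>
      kernel_deriv (contParam2 (by fun_prop) hx₂.1) x₃
    have K1022 : HasDerivAt (fun t : ℝ => ∫ τ₃ in (0:ℝ)..t,
          (t - τ₃) * ∫ τ₄ in (0:ℝ)..x₄, (x₄ - τ₄) * ψ1022 (x₁, τ₃, τ₄))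
        (∫ τ₃ in (0:ℝ)..x₃, ∫ τ₄ in (0:ℝ)..x₄, (x₄ - τ₄) * ψ1022 (x₁, τ₃, τ₄)) x₃ :=
      kernel_deriv (contParam2 (by fun_prop) hx₄.1) x₃
    have HD := (((((((((hasDerivAt_const x₃ (ψ10 0 0 x₁)).add
        (hasDerivAt_const x₃ (x₄ * ψ10 0 1 x₁))).add
        (hasDerivAt_mul_const (ψ10 1 0 x₁))).add
        (hasDerivAt_mul_const (x₄ * ψ10 1 1 x₁))).add
      ((((hasDerivAt_const x₃ (∫ τ₂ in (0:ℝ)..x₂, ψ11 0 0 (x₁, τ₂))).add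
        (hasDerivAt_const x₃ (x₄ * ∫ τ₂ in (0:ℝ)..x₂, ψ11 0 1 (x₁, τ₂)))).add
        (hasDerivAt_mul_const (∫ τ₂ in (0:ℝ)..x₂, ψ11 1 0 (x₁, τ₂)))).add
        (hasDerivAt_mul_const (x₄ * ∫ τ₂ in (0:ℝ)..x₂, ψ11 1 1 (x₁, τ₂))))).add
      ((K102 0).add ((K102 1).const_mul x₄))).add
      ((hasDerivAt_const x₃ (∫ τ₄ in (0:ℝ)..x₄, (x₄ - τ₄) * ψ10d2 0 (x₁, τ₄))).add
        (hasDerivAt_mul_const (∫ τ₄ in (0:ℝ)..x₄, (x₄ - τ₄) * ψ10d2 1 (x₁, τ₄))))).add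
      ((K112 0).add ((K112 1).const_mul x₄))).add
      ((hasDerivAt_const x₃ (∫ τ₂ in (0:ℝ)..x₂, ∫ τ₄ in (0:ℝ)..x₄,
          (x₄ - τ₄) * ψ11d2 0 (x₁, τ₂, τ₄))).add
        (hasDerivAt_mul_const (∫ τ₂ in (0:ℝ)..x₂, ∫ τ₄ in (0:ℝ)..x₄,
          (x₄ - τ₄) * ψ11d2 1 (x₁, τ₂, τ₄))))).add K1022
    have key : ∀ t ∈ Icc (0:ℝ) h₃,
        (ψ10 0 0 x₁ + x₄ * ψ10 0 1 x₁ + t * ψ10 1 0 x₁ + t * (x₄ * ψ10 1 1 x₁))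
        + ((∫ τ₂ in (0:ℝ)..x₂, ψ11 0 0 (x₁, τ₂)) + x₄ * (∫ τ₂ in (0:ℝ)..x₂, ψ11 0 1 (x₁, τ₂))
            + t * (∫ τ₂ in (0:ℝ)..x₂, ψ11 1 0 (x₁, τ₂))
            + t * (x₄ * ∫ τ₂ in (0:ℝ)..x₂, ψ11 1 1 (x₁, τ₂)))
        + ((∫ τ₃ in (0:ℝ)..t, (t - τ₃) * ψ102 0 (x₁, τ₃))
            + x₄ * ∫ τ₃ in (0:ℝ)..t, (t - τ₃) * ψ102 1 (x₁, τ₃))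
        + ((∫ τ₄ in (0:ℝ)..x₄, (x₄ - τ₄) * ψ10d2 0 (x₁, τ₄))
            + t * ∫ τ₄ in (0:ℝ)..x₄, (x₄ - τ₄) * ψ10d2 1 (x₁, τ₄))
        + ((∫ τ₂ in (0:ℝ)..x₂, ∫ τ₃ in (0:ℝ)..t, (t - τ₃) * ψ112 0 (x₁, τ₂, τ₃))
            + x₄ * ∫ τ₂ in (0:ℝ)..x₂, ∫ τ₃ in (0:ℝ)..t, (t - τ₃) * ψ112 1 (x₁, τ₂, τ₃))
        + ((∫ τ₂ in (0:ℝ)..x₂, ∫ τ₄ in (0:ℝ)..x₄, (x₄ - τ₄) * ψ11d2 0 (x₁, τ₂, τ₄))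
            + t * ∫ τ₂ in (0:ℝ)..x₂, ∫ τ₄ in (0:ℝ)..x₄, (x₄ - τ₄) * ψ11d2 1 (x₁, τ₂, τ₄))
        + (∫ τ₃ in (0:ℝ)..t, ∫ τ₄ in (0:ℝ)..x₄, (t - τ₃) * ((x₄ - τ₄) * ψ1022 (x₁, τ₃, τ₄)))
        = (ψ10 0 0 x₁ + x₄ * ψ10 0 1 x₁ + t * ψ10 1 0 x₁ + t * (x₄ * ψ10 1 1 x₁))
        + ((∫ τ₂ in (0:ℝ)..x₂, ψ11 0 0 (x₁, τ₂)) + x₄ * (∫ τ₂ in (0:ℝ)..x₂, ψ11 0 1 (x₁, τ₂))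
            + t * (∫ τ₂ in (0:ℝ)..x₂, ψ11 1 0 (x₁, τ₂))
            + t * (x₄ * ∫ τ₂ in (0:ℝ)..x₂, ψ11 1 1 (x₁, τ₂)))
        + ((∫ τ₃ in (0:ℝ)..t, (t - τ₃) * ψ102 0 (x₁, τ₃))
            + x₄ * ∫ τ₃ in (0:ℝ)..t, (t - τ₃) * ψ102 1 (x₁, τ₃))
        + ((∫ τ₄ in (0:ℝ)..x₄, (x₄ - τ₄) * ψ10d2 0 (x₁, τ₄))
            + t * ∫ τ₄ in (0:ℝ)..x₄, (x₄ - τ₄) * ψ10d2 1 (x₁, τ₄))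
        + ((∫ τ₃ in (0:ℝ)..t, (t - τ₃) * ∫ τ₂ in (0:ℝ)..x₂, ψ112 0 (x₁, τ₂, τ₃))
            + x₄ * ∫ τ₃ in (0:ℝ)..t, (t - τ₃) * ∫ τ₂ in (0:ℝ)..x₂, ψ112 1 (x₁, τ₂, τ₃))
        + ((∫ τ₂ in (0:ℝ)..x₂, ∫ τ₄ in (0:ℝ)..x₄, (x₄ - τ₄) * ψ11d2 0 (x₁, τ₂, τ₄))
            + t * ∫ τ₂ in (0:ℝ)..x₂, ∫ τ₄ in (0:ℝ)..x₄, (x₄ - τ₄) * ψ11d2 1 (x₁, τ₂, τ₄))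
        + (∫ τ₃ in (0:ℝ)..t, (t - τ₃) * ∫ τ₄ in (0:ℝ)..x₄, (x₄ - τ₄) * ψ1022 (x₁, τ₃, τ₄)) := by
      intro t ht
      have s0 : (∫ τ₂ in (0:ℝ)..x₂, ∫ τ₃ in (0:ℝ)..t, (t - τ₃) * ψ112 0 (x₁, τ₂, τ₃))
          = ∫ τ₃ in (0:ℝ)..t, ∫ τ₂ in (0:ℝ)..x₂, (t - τ₃) * ψ112 0 (x₁, τ₂, τ₃) :=
        swap_int (by fun_prop) hx₂.1 ht.1
      have s1 : (∫ τ₂ in (0:ℝ)..x₂, ∫ τ₃ in (0:ℝ)..t, (t - τ₃) * ψ112 1 (x₁, τ₂, τ₃))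
          = ∫ τ₃ in (0:ℝ)..t, ∫ τ₂ in (0:ℝ)..x₂, (t - τ₃) * ψ112 1 (x₁, τ₂, τ₃) :=
        swap_int (by fun_prop) hx₂.1 ht.1
      rw [s0, s1]
      simp only [intervalIntegral.integral_const_mul]
    exact ((HD.hasDerivWithinAt).congr key (key x₃ hx₃)).congr_deriv (by ring)
  · -- second derivative in x₃
    have G102 : ∀ i₄ : Fin 2, HasDerivAt (fun t : ℝ => ∫ τ₃ in (0:ℝ)..t, ψ102 i₄ (x₁, τ₃))
        (ψ102 i₄ (x₁, x₃)) x₃ := fun i₄ => ftc0 (by fun_prop) x₃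
    have G112 : ∀ i₄ : Fin 2, HasDerivAt
        (fun t : ℝ => ∫ τ₃ in (0:ℝ)..t, ∫ τ₂ in (0:ℝ)..x₂, ψ112 i₄ (x₁, τ₂, τ₃))
        (∫ τ₂ in (0:ℝ)..x₂, ψ112 i₄ (x₁, τ₂, x₃)) x₃ := fun i₄ =>
      ftc0 (contParam2 (by fun_prop) hx₂.1) x₃
    have G1022 : HasDerivAt
        (fun t : ℝ => ∫ τ₃ in (0:ℝ)..t, ∫ τ₄ in (0:ℝ)..x₄, (x₄ - τ₄) * ψ1022 (x₁, τ₃, τ₄))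
        (∫ τ₄ in (0:ℝ)..x₄, (x₄ - τ₄) * ψ1022 (x₁, x₃, τ₄)) x₃ :=
      ftc0 (contParam2 (by fun_prop) hx₄.1) x₃
    have HD := ((((((hasDerivAt_const x₃ (ψ10 1 0 x₁ + x₄ * ψ10 1 1 x₁)).add
        (hasDerivAt_const x₃ ((∫ τ₂ in (0:ℝ)..x₂, ψ11 1 0 (x₁, τ₂))
          + x₄ * ∫ τ₂ in (0:ℝ)..x₂, ψ11 1 1 (x₁, τ₂)))).add
        ((G102 0).add ((G102 1).const_mul x₄))).add
        (hasDerivAt_const x₃ (∫ τ₄ in (0:ℝ)..x₄, (x₄ - τ₄) * ψ10d2 1 (x₁, τ₄)))).add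
        ((G112 0).add ((G112 1).const_mul x₄))).add
        (hasDerivAt_const x₃ (∫ τ₂ in (0:ℝ)..x₂, ∫ τ₄ in (0:ℝ)..x₄,
          (x₄ - τ₄) * ψ11d2 1 (x₁, τ₂, τ₄)))).add G1022
    exact HD.hasDerivWithinAt.congr_deriv (by ring)
  · -- first derivative in x₄
    have K : HasDerivAt (fun t : ℝ => ∫ τ₄ in (0:ℝ)..t, (t - τ₄) * ψ1022 (x₁, x₃, τ₄))
        (∫ τ₄ in (0:ℝ)..x₄, ψ1022 (x₁, x₃, τ₄)) x₄ := kernel_deriv (by fun_prop) x₄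
    have HD := ((((hasDerivAt_const x₄ (ψ102 0 (x₁, x₃))).add
        (hasDerivAt_mul_const (ψ102 1 (x₁, x₃)))).add
        ((hasDerivAt_const x₄ (∫ τ₂ in (0:ℝ)..x₂, ψ112 0 (x₁, τ₂, x₃))).add
          (hasDerivAt_mul_const (∫ τ₂ in (0:ℝ)..x₂, ψ112 1 (x₁, τ₂, x₃))))).add K)
    exact HD.hasDerivWithinAt.congr_deriv (by ring)
  · -- second derivative in x₄
    have K : HasDerivAt (fun t : ℝ => ∫ τ₄ in (0:ℝ)..t, ψ1022 (x₁, x₃, τ₄))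
        (ψ1022 (x₁, x₃, x₄)) x₄ := ftc0 (by fun_prop) x₄
    have HD := (((hasDerivAt_const x₄ (ψ102 1 (x₁, x₃))).add
        (hasDerivAt_const x₄ (∫ τ₂ in (0:ℝ)..x₂, ψ112 1 (x₁, τ₂, x₃)))).add K)
    exact HD.hasDerivWithinAt.congr_deriv
      (by simpa using e1022 (x₁, x₃, x₄) ⟨hx₁, hx₃, hx₄⟩)
end
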